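/- arXiv:2401.16198 — 5 statements merged into one kernel-verified Lean document; each statement's English description precedes it below -/
import Mathlib

section
/- For every valid dynamic linear contract π there exists a valid free-fall dynamic linear contract π′ with Util(π′) ≥ Util(π). (Free-fall contracts are optimal among dynamic linear contracts.) -/
open Finset

/-- Indifference point `α_{i,i+1}` between actions `i` and `i+1`. -/
noncomputable def indiff (c R : ℕ → ℝ) (i : ℕ) : ℝ :=
  (c (i + 1) - c i) / (R (i + 1) - R i)

/-- Breakpoint `α_{i,i+1}` with the convention `α_{0,1} := 0`. -/
noncomputable def bp (c R : ℕ → ℝ) (i : ℕ) : ℝ :=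
  if i = 0 then 0 else indiff c R i

/-- A linear contract instance with `n ≥ 2` actions indexed `1,…,n`:
costs `0 = c_1 < … < c_n`, rewards `0 ≤ R_1 < … < R_n`, and indifference
points satisfying `0 < α_{1,2} < … < α_{n-1,n} ≤ 1`. -/
def LinInstance (n : ℕ) (c R : ℕ → ℝ) : Prop :=
  2 ≤ n ∧ c 1 = 0 ∧ 0 ≤ R 1 ∧
    (∀ i, 1 ≤ i → i < n → c i < c (i + 1)) ∧
    (∀ i, 1 ≤ i → i < n → R i < R (i + 1)) ∧
    0 < indiff c R 1 ∧
    (∀ i, 1 ≤ i → i + 1 ≤ n - 1 → indiff c R i < indiff c R (i + 1)) ∧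
    indiff c R (n - 1) ≤ 1

/-- Best-response set of the agent to the linear contract with scalar `x`. -/
def BR (n : ℕ) (c R : ℕ → ℝ) (x : ℝ) : Set ℕ :=
  {i | i ∈ Finset.Icc 1 n ∧ ∀ j ∈ Finset.Icc 1 n, x * R j - c j ≤ x * R i - c i}

/-- A dynamic linear contract with `K` segments (indexed `1,…,K`):
scalars `α`, durations `τ`, and actions `a`. -/
structure DLC where
  K : ℕ
  α : ℕ → ℝ
  τ : ℕ → ℝ
  a : ℕ → ℕ

namespace DLC

/-- Total duration of the first `k` segments. -/
noncomputable def Tsum (π : DLC) (k : ℕ) : ℝ := ∑ j ∈ Finset.Icc 1 k, π.τ j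

/-- Cumulative scalar contract of the first `k` segments. -/
noncomputable def Asum (π : DLC) (k : ℕ) : ℝ := ∑ j ∈ Finset.Icc 1 k, π.α j * π.τ j

/-- Time-averaged contract `ᾱ^k` after the first `k` segments. -/
noncomputable def avg (π : DLC) (k : ℕ) : ℝ := π.Asum k / π.Tsum k

/-- Validity: positive durations, nonnegative scalars, actions in `{1,…,n}`,
and each action is a best response to the historical average contract at the
end of its segment, and (for `k ≥ 2`) also at its beginning. -/
def Valid (n : ℕ) (c R : ℕ → ℝ) (π : DLC) : Prop :=
  1 ≤ π.K ∧
    (∀ k ∈ Finset.Icc 1 π.K, 0 ≤ π.α k ∧ 0 < π.τ k ∧ π.a k ∈ Finset.Icc 1 n) ∧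
    (∀ k ∈ Finset.Icc 1 π.K, π.a k ∈ BR n c R (π.avg k)) ∧
    (∀ k, 2 ≤ k → k ≤ π.K → π.a k ∈ BR n c R (π.avg (k - 1)))

/-- Time-averaged principal utility. -/
noncomputable def Util (R : ℕ → ℝ) (π : DLC) : ℝ :=
  (∑ k ∈ Finset.Icc 1 π.K, π.τ k * (1 - π.α k) * R (π.a k)) / π.Tsum π.K

/-- Time-averaged agent utility. -/
noncomputable def UtilA (c R : ℕ → ℝ) (π : DLC) : ℝ :=
  (∑ k ∈ Finset.Icc 1 π.K, π.τ k * (π.α k * R (π.a k) - c (π.a k))) / π.Tsum π.K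

/-- Free-fall: the zero contract is offered on every segment after the first. -/
def FreeFall (π : DLC) : Prop := ∀ k, 2 ≤ k → k ≤ π.K → π.α k = 0

/-- Cumulative principal utility `u_P^{(t)}(π)` up to time `t`. -/
noncomputable def cumUtil (R : ℕ → ℝ) (π : DLC) (t : ℝ) : ℝ :=
  ∑ k ∈ Finset.Icc 1 π.K,
    (min t (π.Tsum k) - min t (π.Tsum (k - 1))) * (1 - π.α k) * R (π.a k)

/-- Cumulative scalar contract `A^{(t)}` up to time `t`. -/
noncomputable def cumA (π : DLC) (t : ℝ) : ℝ :=
  ∑ k ∈ Finset.Icc 1 π.K, (min t (π.Tsum k) - min t (π.Tsum (k - 1))) * π.α k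

end DLC

section Helpers
variable {n : ℕ} {c R : ℕ → ℝ}

lemma ff_R_step (h : LinInstance n c R) {i : ℕ} (h1 : 1 ≤ i) (h2 : i < n) :
    R i < R (i + 1) := h.2.2.2.2.1 i h1 h2

lemma ff_c_step (h : LinInstance n c R) {i : ℕ} (h1 : 1 ≤ i) (h2 : i < n) :
    c (i + 1) - c i = indiff c R i * (R (i + 1) - R i) := by
  have hR := ff_R_step h h1 h2
  rw [indiff, div_mul_cancel₀]
  linarith

lemma ff_indiff_mono (h : LinInstance n c R) {i j : ℕ} (h1 : 1 ≤ i) (hij : i ≤ j)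
    (hj : j ≤ n - 1) : indiff c R i ≤ indiff c R j := by
  induction j, hij using Nat.le_induction with
  | base => exact le_rfl
  | succ j hij ih =>
      have hj' : j ≤ n - 1 := by omega
      have h2 : j + 1 ≤ n - 1 := hj
      have := h.2.2.2.2.2.2.1 j (by omega) h2
      have := ih (by omega)
      linarith

lemma ff_indiff_pos (h : LinInstance n c R) {i : ℕ} (h1 : 1 ≤ i) (hi : i ≤ n - 1) :
    0 < indiff c R i := lt_of_lt_of_le h.2.2.2.2.2.1 (ff_indiff_mono h le_rfl h1 hi)

lemma ff_indiff_le_one (h : LinInstance n c R) {i : ℕ} (h1 : 1 ≤ i) (hi : i ≤ n - 1) :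
    indiff c R i ≤ 1 := le_trans (ff_indiff_mono h h1 hi le_rfl) h.2.2.2.2.2.2.2

lemma ff_W_step (h : LinInstance n c R) {i : ℕ} (h1 : 1 ≤ i) (h2 : i < n) :
    R i - c i ≤ R (i + 1) - c (i + 1) := by
  have hc := ff_c_step h h1 h2
  have hR := ff_R_step h h1 h2
  have h3 : indiff c R i ≤ 1 := ff_indiff_le_one h h1 (by omega)
  nlinarith

lemma ff_W_mono (h : LinInstance n c R) {i j : ℕ} (h1 : 1 ≤ i) (hij : i ≤ j) (hj : j ≤ n) :
    R i - c i ≤ R j - c j := by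
  induction j, hij using Nat.le_induction with
  | base => exact le_rfl
  | succ j hij ih =>
      have := ff_W_step h (show 1 ≤ j by omega) (show j < n by omega)
      have := ih (by omega)
      linarith

lemma ff_val_up (x : ℝ) {j : ℕ} :
    ∀ i, j ≤ i → (∀ m, j ≤ m → m < i → c (m + 1) - c m ≤ x * (R (m + 1) - R m)) →
      x * R j - c j ≤ x * R i - c i := by
  intro i hji
  induction i, hji using Nat.le_induction with
  | base => intro _; exact le_rfl
  | succ i hji ih =>
      intro hx
      have h1 := ih (fun m hm hmi => hx m hm (by omega))
      have h2 := hx i hji (by omega)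
      have : x * R i - c i ≤ x * R (i + 1) - c (i + 1) := by linarith [hx i hji (Nat.lt_succ_self i)]
      linarith

lemma ff_val_down (x : ℝ) {i : ℕ} :
    ∀ j, i ≤ j → (∀ m, i ≤ m → m < j → x * (R (m + 1) - R m) ≤ c (m + 1) - c m) →
      x * R j - c j ≤ x * R i - c i := by
  intro j hij
  induction j, hij using Nat.le_induction with
  | base => intro _; exact le_rfl
  | succ j hij ih =>
      intro hx
      have h1 := ih (fun m hm hmj => hx m hm (by omega))
      have h2 := hx j hij (by omega)
      linarith

lemma ff_mem_BR (h : LinInstance n c R) {i : ℕ} {x : ℝ} (h1 : 1 ≤ i) (h2 : i ≤ n)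
    (hlo : ∀ m, 1 ≤ m → m < i → indiff c R m ≤ x)
    (hhi : ∀ m, i ≤ m → m < n → x ≤ indiff c R m) :
    i ∈ BR n c R x := by
  refine ⟨by simp [mem_Icc]; omega, ?_⟩
  intro j hj
  simp only [mem_Icc] at hj
  rcases le_or_gt j i with hji | hij
  · refine ff_val_up x i hji (fun m hm hmi => ?_)
    have hm1 : 1 ≤ m := le_trans hj.1 hm
    have hRm := ff_R_step h hm1 (by omega)
    have := hlo m hm1 hmi
    rw [ff_c_step h hm1 (by omega)]
    nlinarith
  · refine ff_val_down x j (le_of_lt hij) (fun m hm hmj => ?_)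
    have hm1 : 1 ≤ m := le_trans h1 hm
    have hRm := ff_R_step h hm1 (by omega)
    have := hhi m hm (by omega)
    rw [ff_c_step h hm1 (by omega)]
    nlinarith

lemma ff_BR_indiff_le (h : LinInstance n c R) {i : ℕ} {x : ℝ} (hBR : i ∈ BR n c R x)
    {m : ℕ} (hm1 : 1 ≤ m) (hmi : m < i) : indiff c R m ≤ x := by
  obtain ⟨hi, hval⟩ := hBR
  simp only [mem_Icc] at hi
  have h2 : 2 ≤ i := by omega
  obtain ⟨p, rfl⟩ : ∃ p, i = p + 1 := ⟨i - 1, by omega⟩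
  have hp : p ∈ Finset.Icc 1 n := by simp [mem_Icc]; omega
  have hv := hval p hp
  have hR := ff_R_step h (show 1 ≤ p by omega) (show p < n by omega)
  have hstep : indiff c R p ≤ x := by
    have hc := ff_c_step h (show 1 ≤ p by omega) (show p < n by omega)
    nlinarith
  exact le_trans (ff_indiff_mono h hm1 (by omega) (by omega)) hstep

lemma ff_BR_val_eq {i j : ℕ} {x : ℝ} (hi : i ∈ BR n c R x) (hj : j ∈ BR n c R x) :
    x * R i - c i = x * R j - c j :=
  le_antisymm (hj.2 i hi.1) (hi.2 j hj.1)

end Helpers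

section DLCHelpers
variable {n : ℕ} {c R : ℕ → ℝ} {σ : DLC}

lemma ff_Tsum_pos (hV : σ.Valid n c R) {k : ℕ} (h1 : 1 ≤ k) (hk : k ≤ σ.K) :
    0 < σ.Tsum k := by
  apply Finset.sum_pos
  · intro j hj
    simp only [Finset.mem_Icc] at hj
    exact (hV.2.1 j (by simp [Finset.mem_Icc]; omega)).2.1
  · exact ⟨1, by simp [Finset.mem_Icc]; omega⟩

lemma ff_Asum_mono (hV : σ.Valid n c R) {k k' : ℕ} (hk : k ≤ k') (hk' : k' ≤ σ.K) :
    σ.Asum k ≤ σ.Asum k' := by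
  apply Finset.sum_le_sum_of_subset_of_nonneg
  · exact Finset.Icc_subset_Icc_right hk
  · intro j hj _
    simp only [Finset.mem_Icc] at hj
    have h := hV.2.1 j (by simp [Finset.mem_Icc]; omega)
    exact mul_nonneg h.1 (le_of_lt h.2.1)

lemma ff_Asum_nonneg (hV : σ.Valid n c R) {k : ℕ} (hk : k ≤ σ.K) : 0 ≤ σ.Asum k := by
  have := ff_Asum_mono hV (Nat.zero_le k) hk
  simpa [DLC.Asum] using this

lemma ff_avg_mul (hV : σ.Valid n c R) {k : ℕ} (h1 : 1 ≤ k) (hk : k ≤ σ.K) :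
    σ.avg k * σ.Tsum k = σ.Asum k := by
  rw [DLC.avg, div_mul_cancel₀]
  exact ne_of_gt (ff_Tsum_pos hV h1 hk)

lemma ff_payment_identity (hV : σ.Valid n c R) :
    ∀ k, 1 ≤ k → k ≤ σ.K →
      ∑ j ∈ Finset.Icc 1 k, σ.τ j * (σ.α j * R (σ.a j) - c (σ.a j)) =
        σ.Asum k * R (σ.a k) - σ.Tsum k * c (σ.a k) := by
  intro k h1
  induction k, h1 using Nat.le_induction with
  | base =>
      intro _
      simp [DLC.Asum, DLC.Tsum]
      ring
  | succ k h1 ih =>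
      intro hk
      have hkK : k ≤ σ.K := by omega
      rw [Finset.sum_Icc_succ_top (by omega), ih hkK]
      have hA : σ.Asum (k + 1) = σ.Asum k + σ.α (k + 1) * σ.τ (k + 1) :=
        Finset.sum_Icc_succ_top (by omega) _
      have hT : σ.Tsum (k + 1) = σ.Tsum k + σ.τ (k + 1) :=
        Finset.sum_Icc_succ_top (by omega) _
      have hbr1 : σ.a k ∈ BR n c R (σ.avg k) := hV.2.2.1 k (by simp [Finset.mem_Icc]; omega)
      have hbr2 : σ.a (k + 1) ∈ BR n c R (σ.avg k) := by
        have := hV.2.2.2 (k + 1) (by omega) hk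
        simpa using this
      have hval := ff_BR_val_eq hbr1 hbr2
      have hmul := ff_avg_mul hV (show 1 ≤ k by omega) hkK
      have hkey : σ.Asum k * R (σ.a k) - σ.Tsum k * c (σ.a k) =
          σ.Asum k * R (σ.a (k + 1)) - σ.Tsum k * c (σ.a (k + 1)) := by
        have := congrArg (fun y => σ.Tsum k * y) hval
        simp only [mul_sub] at this
        calc σ.Asum k * R (σ.a k) - σ.Tsum k * c (σ.a k)
            = σ.Tsum k * (σ.avg k * R (σ.a k)) - σ.Tsum k * c (σ.a k) := by
              rw [← mul_assoc, mul_comm (σ.Tsum k) (σ.avg k), hmul]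
          _ = σ.Tsum k * (σ.avg k * R (σ.a (k+1))) - σ.Tsum k * c (σ.a (k+1)) := by linarith
          _ = σ.Asum k * R (σ.a (k+1)) - σ.Tsum k * c (σ.a (k+1)) := by
              rw [← mul_assoc, mul_comm (σ.Tsum k) (σ.avg k), hmul]
      rw [hA, hT]
      rw [hkey]
      ring

lemma ff_util_num (hV : σ.Valid n c R) :
    ∑ k ∈ Finset.Icc 1 σ.K, σ.τ k * (1 - σ.α k) * R (σ.a k) =
      ∑ k ∈ Finset.Icc 1 σ.K, σ.τ k * (R (σ.a k) - c (σ.a k)) -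
        (σ.Asum σ.K * R (σ.a σ.K) - σ.Tsum σ.K * c (σ.a σ.K)) := by
  rw [← ff_payment_identity hV σ.K hV.1 le_rfl, ← Finset.sum_sub_distrib]
  apply Finset.sum_congr rfl
  intro x _
  ring

end DLCHelpers

section Layer

lemma ff_telescope (W : ℕ → ℝ) {s m nn : ℕ} (hsm : s ≤ m) (hmn : m ≤ nn) :
    ∑ i ∈ Finset.Ico s nn, (if i < m then W (i + 1) - W i else 0) = W m - W s := by
  rw [← Finset.sum_filter]
  have hf : (Finset.Ico s nn).filter (fun i => i < m) = Finset.Ico s m := by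
    ext x; simp only [Finset.mem_filter, Finset.mem_Ico]; omega
  rw [hf, Finset.sum_Ico_eq_sub _ hsm, Finset.sum_range_sub, Finset.sum_range_sub]
  ring

lemma ff_swap (S T : Finset ℕ) (τ Δ : ℕ → ℝ) (A : ℕ → ℕ) :
    ∑ k ∈ S, τ k * (∑ i ∈ T, if i < A k then Δ i else 0) =
      ∑ i ∈ T, Δ i * (∑ k ∈ S, if i < A k then τ k else 0) := by
  simp_rw [Finset.mul_sum]
  rw [Finset.sum_comm]
  refine Finset.sum_congr rfl (fun i _ => Finset.sum_congr rfl (fun k _ => ?_))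
  by_cases h : i < A k <;> simp [h, mul_comm]

end Layer


/-- For every valid dynamic linear contract `π` there is a valid
free-fall dynamic linear contract `π'` with `Util(π') ≥ Util(π)`. -/
theorem free_fall_optimal_linear (n : ℕ) (c R : ℕ → ℝ) (hInst : LinInstance n c R)
    (π : DLC) (hπ : π.Valid n c R) :
    ∃ π' : DLC, π'.Valid n c R ∧ π'.FreeFall ∧ π'.Util R ≥ π.Util R := by
  classical
  have hn : 2 ≤ n := hInst.1
  have hK := hπ.1
  set T := π.Tsum π.K with hT_def
  set A := π.Asum π.K with hA_def
  have hT : 0 < T := ff_Tsum_pos hπ hK le_rfl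
  by_cases hA0 : A = 0
  · -- π is already free-fall
    refine ⟨π, hπ, ?_, le_rfl⟩
    intro k h2 hk
    have hnn : ∀ j ∈ Finset.Icc 1 π.K, 0 ≤ π.α j * π.τ j := by
      intro j hj
      have h := hπ.2.1 j hj
      exact mul_nonneg h.1 (le_of_lt h.2.1)
    have hz := (Finset.sum_eq_zero_iff_of_nonneg hnn).1 hA0 k
      (by simp only [Finset.mem_Icc]; omega)
    have hτ := (hπ.2.1 k (by simp only [Finset.mem_Icc]; omega)).2.1
    rcases mul_eq_zero.1 hz with h | h
    · exact h
    · exact absurd h (ne_of_gt hτ)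
  · have hA : 0 < A := lt_of_le_of_ne (ff_Asum_nonneg hπ le_rfl) (Ne.symm hA0)
    set aa := A / T with haa
    have haapos : 0 < aa := div_pos hA hT
    set S : Finset ℕ := (Finset.Icc 1 n).filter (fun i => bp c R (i - 1) ≤ aa) with hS
    have h1S : 1 ∈ S := by
      simp only [hS, Finset.mem_filter, Finset.mem_Icc]
      refine ⟨⟨le_rfl, by omega⟩, ?_⟩
      simp only [Nat.sub_self, bp, if_pos rfl]
      exact le_of_lt haapos
    set s := S.max' ⟨1, h1S⟩ with hs_def
    have hsS : s ∈ S := Finset.max'_mem _ _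
    have hs1n : 1 ≤ s ∧ s ≤ n := by
      have := (Finset.mem_filter.1 hsS).1
      simpa [Finset.mem_Icc] using this
    obtain ⟨hs1, hsn⟩ := hs1n
    have hbs : bp c R (s - 1) ≤ aa := (Finset.mem_filter.1 hsS).2
    have hbs' : 2 ≤ s → indiff c R (s - 1) ≤ aa := by
      intro h2
      rwa [bp, if_neg (by omega)] at hbs
    have hslt : s < n → aa < indiff c R s := by
      intro hlt
      by_contra hcon
      push_neg at hcon
      have hmem : s + 1 ∈ S := by
        simp only [hS, Finset.mem_filter, Finset.mem_Icc]
        refine ⟨⟨by omega, by omega⟩, ?_⟩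
        rw [show s + 1 - 1 = s from rfl, bp, if_neg (by omega)]
        exact hcon
      have := Finset.le_max' S (s + 1) hmem
      omega
    set M := n - s + 1 with hM
    have hM1 : 1 ≤ M := by omega
    have hMn : M ≤ n := by omega
    set E : ℕ → ℝ := fun k => if k = 0 then 0 else if M ≤ k then 1 else aa / indiff c R (n - k)
      with hE
    have hE0 : E 0 = 0 := by simp [hE]
    have hEM : ∀ k, M ≤ k → E k = 1 := by
      intro k hk
      simp only [hE]
      rw [if_neg (by omega), if_pos hk]
    have hEval : ∀ k, 1 ≤ k → k < M → E k = aa / indiff c R (n - k) := by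
      intro k h1 h2
      simp only [hE]
      rw [if_neg (by omega), if_neg (by omega)]
    have hindpos : ∀ i, 1 ≤ i → i ≤ n - 1 → 0 < indiff c R i :=
      fun i h1 h2 => ff_indiff_pos hInst h1 h2
    have hEpos : ∀ k, 1 ≤ k → 0 < E k := by
      intro k h1
      rcases Nat.lt_or_ge k M with h | h
      · rw [hEval k h1 h]
        exact div_pos haapos (hindpos _ (by omega) (by omega))
      · rw [hEM k h]; norm_num
    have hτ'pos : ∀ k, 1 ≤ k → k ≤ M → 0 < E k - E (k - 1) := by
      intro k h1 hk
      rcases Nat.lt_or_ge 1 k with h2 | h2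
      · have hk1 : 1 ≤ k - 1 := by omega
        have hk1M : k - 1 < M := by omega
        rw [hEval (k - 1) hk1 hk1M]
        have hnk1 : n - (k - 1) = n - k + 1 := by omega
        rcases Nat.lt_or_ge k M with hkM | hkM
        · rw [hEval k h1 hkM, hnk1]
          have hstep : indiff c R (n - k) < indiff c R (n - k + 1) :=
            hInst.2.2.2.2.2.2.1 (n - k) (by omega) (by omega)
          have hp1 : 0 < indiff c R (n - k) := hindpos _ (by omega) (by omega)
          have := div_lt_div_of_pos_left haapos hp1 hstep
          linarith
        · have hkM' : k = M := by omega
          rw [hEM k (by omega)]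
          rw [show n - (k - 1) = s by omega]
          have hsp : 0 < indiff c R s := hindpos _ (by omega) (by omega)
          have hlt := hslt (by omega)
          have : aa / indiff c R s < 1 := (div_lt_one hsp).2 hlt
          linarith
      · have hk1 : k = 1 := by omega
        subst hk1
        simp only [Nat.sub_self, hE0, sub_zero]
        exact hEpos 1 le_rfl
    set α' : ℕ → ℝ := fun k => if k = 1 then aa / E 1 else 0 with hα'
    set τ' : ℕ → ℝ := fun k => E k - E (k - 1) with hτ'
    set a' : ℕ → ℕ := fun k => n + 1 - k with ha'
    set π' : DLC := ⟨M, α', τ', a'⟩ with hπ'def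
    have hπ'K : π'.K = M := rfl
    have hπ'τ : ∀ k, π'.τ k = E k - E (k - 1) := fun _ => rfl
    have hπ'α : ∀ k, π'.α k = if k = 1 then aa / E 1 else 0 := fun _ => rfl
    have hπ'a : ∀ k, π'.a k = n + 1 - k := fun _ => rfl
    have hTsum' : ∀ k, π'.Tsum k = E k := by
      intro k
      induction k with
      | zero =>
          rw [DLC.Tsum, Finset.Icc_eq_empty (by omega), Finset.sum_empty, hE0]
      | succ k ih =>
          rw [DLC.Tsum, Finset.sum_Icc_succ_top (by omega)]
          have hkk : ∑ j ∈ Finset.Icc 1 k, π'.τ j = E k := by rw [← DLC.Tsum, ih]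
          rw [hkk, hπ'τ, Nat.add_sub_cancel]
          ring
    have hAsum' : ∀ k, 1 ≤ k → π'.Asum k = aa := by
      intro k h1
      rw [DLC.Asum, Finset.sum_eq_single_of_mem 1 (by simp only [Finset.mem_Icc]; omega)]
      · rw [hπ'α, hπ'τ, if_pos rfl]
        simp only [Nat.sub_self, hE0, sub_zero]
        exact div_mul_cancel₀ aa (ne_of_gt (hEpos 1 le_rfl))
      · intro j _ hj1
        rw [hπ'α, if_neg hj1, zero_mul]
    have havg' : ∀ k, 1 ≤ k → π'.avg k = aa / E k := by
      intro k h1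
      rw [DLC.avg, hAsum' k h1, hTsum']
    have havg'' : ∀ k, 1 ≤ k → k < M → π'.avg k = indiff c R (n - k) := by
      intro k h1 h2
      rw [havg' k h1, hEval k h1 h2, div_div_cancel₀ (ne_of_gt haapos)]
    have hsBR : s ∈ BR n c R aa := by
      apply ff_mem_BR hInst hs1 hsn
      · intro m hm1 hms
        have h2s : 2 ≤ s := by omega
        exact le_trans (ff_indiff_mono hInst hm1 (by omega) (by omega)) (hbs' h2s)
      · intro m hsm hmn'
        exact le_trans (le_of_lt (hslt (by omega)))
          (ff_indiff_mono hInst (by omega) hsm (by omega))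
    have hval' : π'.Valid n c R := by
      refine ⟨hM1, ?_, ?_, ?_⟩
      · intro k hk
        simp only [hπ'K, Finset.mem_Icc] at hk
        refine ⟨?_, hτ'pos k hk.1 hk.2, ?_⟩
        · rw [hπ'α]
          split
          · exact le_of_lt (div_pos haapos (hEpos 1 le_rfl))
          · exact le_rfl
        · rw [hπ'a]
          simp only [Finset.mem_Icc]
          omega
      · intro k hk
        simp only [hπ'K, Finset.mem_Icc] at hk
        rcases Nat.lt_or_ge k M with hkM | hkM
        · rw [havg'' k hk.1 hkM, hπ'a]
          apply ff_mem_BR hInst (by omega) (by omega)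
          · intro m hm1 hmi
            exact ff_indiff_mono hInst hm1 (by omega) (by omega)
          · intro m him hmn'
            exact ff_indiff_mono hInst (by omega) (by omega) (by omega)
        · have hkM' : k = M := by omega
          subst hkM'
          rw [havg' M hM1, hEM M le_rfl, div_one, hπ'a, show n + 1 - M = s by omega]
          exact hsBR
      · intro k h2 hkM
        rw [hπ'K] at hkM
        have h1 : 1 ≤ k - 1 := by omega
        have hlt : k - 1 < M := by omega
        rw [havg'' (k - 1) h1 hlt, hπ'a, show n - (k - 1) = n + 1 - k by omega]
        apply ff_mem_BR hInst (by omega) (by omega)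
        · intro m hm1 hmi
          exact ff_indiff_mono hInst hm1 (by omega) (by omega)
        · intro m him hmn'
          exact ff_indiff_mono hInst (by omega) him (by omega)
    have havgK : π.avg π.K = aa := by
      rw [haa, hA_def, hT_def, DLC.avg]
    have haKBR : π.a π.K ∈ BR n c R aa := by
      have := hπ.2.2.1 π.K (by simp only [Finset.mem_Icc]; omega)
      rwa [havgK] at this
    have hveq : aa * R s - c s = aa * R (π.a π.K) - c (π.a π.K) := ff_BR_val_eq hsBR haKBR
    have haIcc : ∀ k ∈ Finset.Icc 1 π.K, 1 ≤ π.a k ∧ π.a k ≤ n := by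
      intro k hk
      have := (hπ.2.1 k hk).2.2
      simpa [Finset.mem_Icc] using this
    have hΔnn : ∀ i ∈ Finset.Ico s n, 0 ≤ R (i + 1) - c (i + 1) - (R i - c i) := by
      intro i hi
      simp only [Finset.mem_Ico] at hi
      have := ff_W_step hInst (show 1 ≤ i by omega) hi.2
      linarith
    have ht_bound : ∀ i, s ≤ i → i < n →
        (∑ k ∈ Finset.Icc 1 π.K, if i < π.a k then π.τ k else 0) ≤ A / indiff c R i := by
      intro i hsi hin
      have hipos : 0 < indiff c R i := hindpos i (by omega) (by omega)
      rw [← Finset.sum_filter]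
      set F := (Finset.Icc 1 π.K).filter (fun k => i < π.a k) with hF
      rcases F.eq_empty_or_nonempty with hFe | hFne
      · rw [hFe]
        simp only [Finset.sum_empty]
        positivity
      · set k0 := F.max' hFne with hk0
        have hk0F : k0 ∈ F := Finset.max'_mem _ _
        obtain ⟨hk0Icc, hk0a⟩ := Finset.mem_filter.1 hk0F
        simp only [Finset.mem_Icc] at hk0Icc
        have hsub : F ⊆ Finset.Icc 1 k0 := by
          intro x hx
          have hle := Finset.le_max' F x hx
          have hx' := (Finset.mem_filter.1 hx).1
          simp only [Finset.mem_Icc] at hx' ⊢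
          omega
        have h1 : ∑ k ∈ F, π.τ k ≤ π.Tsum k0 := by
          apply Finset.sum_le_sum_of_subset_of_nonneg hsub
          intro j hj _
          simp only [Finset.mem_Icc] at hj
          exact le_of_lt (hπ.2.1 j (by simp only [Finset.mem_Icc]; omega)).2.1
        have hBRk0 : π.a k0 ∈ BR n c R (π.avg k0) :=
          hπ.2.2.1 k0 (by simp only [Finset.mem_Icc]; omega)
        have h2 : indiff c R i ≤ π.avg k0 := ff_BR_indiff_le hInst hBRk0 (by omega) hk0a
        have hT0 : 0 < π.Tsum k0 := ff_Tsum_pos hπ (by omega) hk0Icc.2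
        have h3 : indiff c R i * π.Tsum k0 ≤ π.Asum k0 := by
          have := mul_le_mul_of_nonneg_right h2 (le_of_lt hT0)
          rwa [ff_avg_mul hπ (by omega) hk0Icc.2] at this
        have h4 : π.Asum k0 ≤ A := by
          rw [hA_def]
          exact ff_Asum_mono hπ hk0Icc.2 le_rfl
        rw [le_div_iff₀ hipos]
        nlinarith
    have ht' : ∀ i, s ≤ i → i < n →
        (∑ k ∈ Finset.Icc 1 M, if i < π'.a k then π'.τ k else 0) = aa / indiff c R i := by
      intro i hsi hin
      have hni1 : 1 ≤ n - i := by omega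
      have hniM : n - i < M := by omega
      have hcongr : ∀ k ∈ Finset.Icc 1 M, (if i < π'.a k then π'.τ k else 0) =
          (if k ≤ n - i then π'.τ k else 0) := by
        intro k hk
        simp only [Finset.mem_Icc] at hk
        rw [hπ'a]
        exact if_congr (by omega) rfl rfl
      rw [Finset.sum_congr rfl hcongr, ← Finset.sum_filter]
      have hfeq : (Finset.Icc 1 M).filter (fun k => k ≤ n - i) = Finset.Icc 1 (n - i) := by
        ext x
        simp only [Finset.mem_filter, Finset.mem_Icc]
        omega
      rw [hfeq, ← DLC.Tsum, hTsum', hEval (n - i) hni1 hniM, show n - (n - i) = i by omega]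
    have hTsum_eq : ∑ k ∈ Finset.Icc 1 π.K, π.τ k = T := by rw [hT_def, DLC.Tsum]
    have hlayerπ : ∑ k ∈ Finset.Icc 1 π.K, π.τ k * (R (π.a k) - c (π.a k)) ≤
        T * (R s - c s) + ∑ i ∈ Finset.Ico s n,
          (R (i + 1) - c (i + 1) - (R i - c i)) *
            (∑ k ∈ Finset.Icc 1 π.K, if i < π.a k then π.τ k else 0) := by
      have hstep : ∀ k ∈ Finset.Icc 1 π.K, π.τ k * (R (π.a k) - c (π.a k)) ≤
          π.τ k * ((R s - c s) + ∑ i ∈ Finset.Ico s n,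
            (if i < π.a k then R (i + 1) - c (i + 1) - (R i - c i) else 0)) := by
        intro k hk
        obtain ⟨ha1, han⟩ := haIcc k hk
        have hτk : 0 ≤ π.τ k := le_of_lt (hπ.2.1 k hk).2.1
        apply mul_le_mul_of_nonneg_left _ hτk
        rcases le_or_gt (π.a k) s with hle | hlt
        · have hzero : ∑ i ∈ Finset.Ico s n,
              (if i < π.a k then R (i + 1) - c (i + 1) - (R i - c i) else 0) = 0 := by
            apply Finset.sum_eq_zero
            intro i hi
            simp only [Finset.mem_Ico] at hi
            rw [if_neg (by omega)]
          rw [hzero, add_zero]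
          exact ff_W_mono hInst ha1 hle hsn
        · have htel := ff_telescope (fun i => R i - c i) (le_of_lt hlt) han
          rw [htel]
          ring_nf
          exact le_rfl
      calc ∑ k ∈ Finset.Icc 1 π.K, π.τ k * (R (π.a k) - c (π.a k))
          ≤ ∑ k ∈ Finset.Icc 1 π.K, π.τ k * ((R s - c s) + ∑ i ∈ Finset.Ico s n,
              (if i < π.a k then R (i + 1) - c (i + 1) - (R i - c i) else 0)) :=
            Finset.sum_le_sum hstep
        _ = T * (R s - c s) + ∑ i ∈ Finset.Ico s n,
              (R (i + 1) - c (i + 1) - (R i - c i)) *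
                (∑ k ∈ Finset.Icc 1 π.K, if i < π.a k then π.τ k else 0) := by
            simp_rw [mul_add]
            rw [Finset.sum_add_distrib, ff_swap, ← Finset.sum_mul, hTsum_eq]
    have hlayerπ' : ∑ k ∈ Finset.Icc 1 M, π'.τ k * (R (π'.a k) - c (π'.a k)) =
        (R s - c s) + ∑ i ∈ Finset.Ico s n,
          (R (i + 1) - c (i + 1) - (R i - c i)) * (aa / indiff c R i) := by
      have hstep : ∀ k ∈ Finset.Icc 1 M, π'.τ k * (R (π'.a k) - c (π'.a k)) =
          π'.τ k * ((R s - c s) + ∑ i ∈ Finset.Ico s n,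
            (if i < π'.a k then R (i + 1) - c (i + 1) - (R i - c i) else 0)) := by
        intro k hk
        simp only [Finset.mem_Icc] at hk
        congr 1
        have htel := ff_telescope (fun i => R i - c i) (show s ≤ π'.a k by rw [hπ'a]; omega)
          (show π'.a k ≤ n by rw [hπ'a]; omega)
        rw [htel]
        ring
      rw [Finset.sum_congr rfl hstep]
      simp_rw [mul_add]
      rw [Finset.sum_add_distrib, ff_swap, ← Finset.sum_mul]
      have hTs : ∑ k ∈ Finset.Icc 1 M, π'.τ k = 1 := by
        have h := hTsum' M
        rw [DLC.Tsum] at h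
        rw [h, hEM M le_rfl]
      rw [hTs, one_mul]
      congr 1
      refine Finset.sum_congr rfl (fun i hi => ?_)
      simp only [Finset.mem_Ico] at hi
      rw [ht' i hi.1 hi.2]
    -- final assembly
    refine ⟨π', hval', ?_, ?_⟩
    · intro k h2 hk
      rw [hπ'α, if_neg (by omega)]
    · have hNum := ff_util_num hπ
      rw [← hA_def, ← hT_def] at hNum
      have hNum' := ff_util_num hval'
      rw [hπ'K] at hNum'
      rw [hAsum' M hM1, hTsum', hEM M le_rfl, hπ'a, show n + 1 - M = s by omega] at hNum'
      have hAT : A = T * aa := by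
        rw [haa]
        field_simp
      have h5 : ∑ k ∈ Finset.Icc 1 π.K, π.τ k * (R (π.a k) - c (π.a k)) ≤
          T * (R s - c s) + ∑ i ∈ Finset.Ico s n,
            (R (i + 1) - c (i + 1) - (R i - c i)) * (A / indiff c R i) := by
        refine le_trans hlayerπ ?_
        have : ∀ i ∈ Finset.Ico s n,
            (R (i + 1) - c (i + 1) - (R i - c i)) *
              (∑ k ∈ Finset.Icc 1 π.K, if i < π.a k then π.τ k else 0) ≤
            (R (i + 1) - c (i + 1) - (R i - c i)) * (A / indiff c R i) := by
          intro i hi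
          simp only [Finset.mem_Ico] at hi
          exact mul_le_mul_of_nonneg_left (ht_bound i hi.1 hi.2) (hΔnn i (by simp only [Finset.mem_Ico]; omega))
        linarith [Finset.sum_le_sum this]
      have h6 : T * (∑ k ∈ Finset.Icc 1 M, π'.τ k * (R (π'.a k) - c (π'.a k))) =
          T * (R s - c s) + ∑ i ∈ Finset.Ico s n,
            (R (i + 1) - c (i + 1) - (R i - c i)) * (A / indiff c R i) := by
        rw [hlayerπ', mul_add, Finset.mul_sum]
        congr 1
        refine Finset.sum_congr rfl (fun i hi => ?_)
        rw [hAT]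
        ring
      have h7 : ∑ k ∈ Finset.Icc 1 π.K, π.τ k * (R (π.a k) - c (π.a k)) ≤
          T * (∑ k ∈ Finset.Icc 1 M, π'.τ k * (R (π'.a k) - c (π'.a k))) := by
        rw [h6]; exact h5
      have hsub : A * R (π.a π.K) - T * c (π.a π.K) = T * (aa * R s - 1 * c s) := by
        linear_combination R (π.a π.K) * hAT - T * hveq
      rw [ge_iff_le, DLC.Util, DLC.Util, hπ'K, hTsum', hEM M le_rfl, div_one, ← hT_def,
        div_le_iff₀ hT, hNum, hNum']
      calc (∑ k ∈ Finset.Icc 1 π.K, π.τ k * (R (π.a k) - c (π.a k))) -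
            (A * R (π.a π.K) - T * c (π.a π.K))
          ≤ T * (∑ k ∈ Finset.Icc 1 M, π'.τ k * (R (π'.a k) - c (π'.a k))) -
            (A * R (π.a π.K) - T * c (π.a π.K)) := by linarith
        _ = (∑ k ∈ Finset.Icc 1 M, π'.τ k * (R (π'.a k) - c (π'.a k)) -
              (aa * R s - 1 * c s)) * T := by
            rw [hsub]; ring
end

section
/- For every valid dynamic linear contract π there exists a valid dynamic linear contract π′ = ((α′^k, τ′^k, a′^k))_{k=1}^{K′} with Util(π′) ≥ Util(π) in which no two consecutive segments prescribe the same action, i.e., a′^k ≠ a′^{k+1} for all 1 ≤ k ≤ K′−1. -/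
open Finset

lemma mergeSum (g g' : ℕ → ℝ) (m : ℕ) (hm : 1 ≤ m)
    (h1 : ∀ j, j < m → g' j = g j) (h2 : g' m = g m + g (m + 1))
    (h3 : ∀ j, m < j → g' j = g (j + 1)) (k : ℕ) :
    ∑ j ∈ Finset.Icc 1 k, g' j =
      if k < m then ∑ j ∈ Finset.Icc 1 k, g j else ∑ j ∈ Finset.Icc 1 (k + 1), g j := by
  induction k with
  | zero =>
    rw [if_pos (show 0 < m by omega)]
    simp
  | succ k ih =>
    rw [Finset.sum_Icc_succ_top (by omega : 1 ≤ k + 1)]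
    rcases lt_trichotomy (k + 1) m with h | h | h
    · rw [if_pos h, ih, if_pos (by omega), h1 _ h,
        Finset.sum_Icc_succ_top (by omega : 1 ≤ k + 1)]
    · subst h
      rw [if_neg (by omega), ih, if_pos (by omega), h2,
        Finset.sum_Icc_succ_top (by omega : 1 ≤ k + 2),
        Finset.sum_Icc_succ_top (by omega : 1 ≤ k + 1)]
      ring
    · rw [if_neg (by omega), ih, if_neg (by omega), h3 _ h,
        Finset.sum_Icc_succ_top (by omega : 1 ≤ k + 2)]

/-- Merge segment `m+1` into segment `m`. -/
noncomputable def DLC.merge (π : DLC) (m : ℕ) : DLC where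
  K := π.K - 1
  α := fun k => if k < m then π.α k else if k = m then
      (π.α m * π.τ m + π.α (m + 1) * π.τ (m + 1)) / (π.τ m + π.τ (m + 1)) else π.α (k + 1)
  τ := fun k => if k < m then π.τ k else if k = m then π.τ m + π.τ (m + 1) else π.τ (k + 1)
  a := fun k => if k ≤ m then π.a k else π.a (k + 1)

lemma merge_K (π : DLC) (m : ℕ) : (π.merge m).K = π.K - 1 := rfl

lemma merge_τ_lt (π : DLC) {m k : ℕ} (h : k < m) : (π.merge m).τ k = π.τ k := if_pos h
lemma merge_τ_eq (π : DLC) (m : ℕ) : (π.merge m).τ m = π.τ m + π.τ (m + 1) := by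
  show (if m < m then _ else if m = m then _ else _) = _
  rw [if_neg (lt_irrefl m), if_pos rfl]
lemma merge_τ_gt (π : DLC) {m k : ℕ} (h : m < k) : (π.merge m).τ k = π.τ (k + 1) := by
  show (if k < m then _ else if k = m then _ else _) = _
  rw [if_neg (by omega), if_neg (by omega)]

lemma merge_α_lt (π : DLC) {m k : ℕ} (h : k < m) : (π.merge m).α k = π.α k := if_pos h
lemma merge_α_eq (π : DLC) (m : ℕ) : (π.merge m).α m =
    (π.α m * π.τ m + π.α (m + 1) * π.τ (m + 1)) / (π.τ m + π.τ (m + 1)) := by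
  show (if m < m then _ else if m = m then _ else _) = _
  rw [if_neg (lt_irrefl m), if_pos rfl]
lemma merge_α_gt (π : DLC) {m k : ℕ} (h : m < k) : (π.merge m).α k = π.α (k + 1) := by
  show (if k < m then _ else if k = m then _ else _) = _
  rw [if_neg (by omega), if_neg (by omega)]

lemma merge_a_le (π : DLC) {m k : ℕ} (h : k ≤ m) : (π.merge m).a k = π.a k := if_pos h
lemma merge_a_gt (π : DLC) {m k : ℕ} (h : m < k) : (π.merge m).a k = π.a (k + 1) :=
  if_neg (by omega)

section Merge

variable {n : ℕ} {c R : ℕ → ℝ} {π : DLC} {m : ℕ}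

lemma τpos (hπ : π.Valid n c R) (hm1 : 1 ≤ m) (hm2 : m < π.K) :
    0 < π.τ m + π.τ (m + 1) := by
  have h1 := (hπ.2.1 m (Finset.mem_Icc.2 ⟨hm1, by omega⟩)).2.1
  have h2 := (hπ.2.1 (m + 1) (Finset.mem_Icc.2 ⟨by omega, by omega⟩)).2.1
  linarith

lemma merge_Tsum (hm1 : 1 ≤ m) (k : ℕ) :
    (π.merge m).Tsum k = if k < m then π.Tsum k else π.Tsum (k + 1) := by
  exact mergeSum _ _ m hm1 (fun j hj => merge_τ_lt π hj) (merge_τ_eq π m)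
    (fun j hj => merge_τ_gt π hj) k

lemma merge_Asum (hπ : π.Valid n c R) (hm1 : 1 ≤ m) (hm2 : m < π.K) (k : ℕ) :
    (π.merge m).Asum k = if k < m then π.Asum k else π.Asum (k + 1) := by
  refine mergeSum _ _ m hm1 (fun j hj => by rw [merge_τ_lt π hj, merge_α_lt π hj])
    ?_ (fun j hj => by rw [merge_τ_gt π hj, merge_α_gt π hj]) k
  rw [merge_τ_eq π m, merge_α_eq π m, div_mul_cancel₀ _ (ne_of_gt (τpos hπ hm1 hm2))]

lemma merge_avg (hπ : π.Valid n c R) (hm1 : 1 ≤ m) (hm2 : m < π.K) (k : ℕ) :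
    (π.merge m).avg k = if k < m then π.avg k else π.avg (k + 1) := by
  unfold DLC.avg
  rw [merge_Tsum hm1, merge_Asum hπ hm1 hm2]
  by_cases h : k < m <;> simp [h]

lemma merge_valid (hπ : π.Valid n c R) (hm1 : 1 ≤ m) (hm2 : m < π.K)
    (ha : π.a m = π.a (m + 1)) : (π.merge m).Valid n c R := by
  obtain ⟨hK, hbasic, hend, hstart⟩ := id hπ
  have hKm : (π.merge m).K = π.K - 1 := rfl
  have hb : ∀ j, 1 ≤ j → j ≤ π.K →
      0 ≤ π.α j ∧ 0 < π.τ j ∧ π.a j ∈ Finset.Icc 1 n := by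
    intro j h1 h2; exact hbasic j (Finset.mem_Icc.2 ⟨h1, h2⟩)
  refine ⟨by omega, ?_, ?_, ?_⟩
  · intro k hk
    rw [Finset.mem_Icc, hKm] at hk
    rcases lt_trichotomy k m with h | h | h
    · rw [merge_τ_lt π h, merge_α_lt π h, merge_a_le π h.le]
      exact hb k hk.1 (by omega)
    · subst h
      obtain ⟨h1a, h1τ, h1m⟩ := hb k hk.1 (by omega)
      obtain ⟨h2a, h2τ, h2m⟩ := hb (k + 1) (by omega) (by omega)
      rw [merge_τ_eq π k, merge_α_eq π k, merge_a_le π le_rfl]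
      refine ⟨div_nonneg (by nlinarith) (by linarith), by linarith, h1m⟩
    · rw [merge_τ_gt π h, merge_α_gt π h, merge_a_gt π h]
      exact hb (k + 1) (by omega) (by omega)
  · intro k hk
    rw [Finset.mem_Icc, hKm] at hk
    rw [merge_avg hπ hm1 hm2]
    rcases lt_trichotomy k m with h | h | h
    · rw [if_pos h, merge_a_le π h.le]
      exact hend k (Finset.mem_Icc.2 ⟨hk.1, by omega⟩)
    · subst h
      rw [if_neg (lt_irrefl _), merge_a_le π le_rfl, ha]
      exact hend (k + 1) (Finset.mem_Icc.2 ⟨by omega, by omega⟩)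
    · rw [if_neg (by omega), merge_a_gt π h]
      exact hend (k + 1) (Finset.mem_Icc.2 ⟨by omega, by omega⟩)
  · intro k hk2 hkK
    rw [hKm] at hkK
    rw [merge_avg hπ hm1 hm2]
    rcases lt_trichotomy k m with h | h | h
    · rw [if_pos (by omega), merge_a_le π h.le]
      exact hstart k hk2 (by omega)
    · subst h
      rw [if_pos (show k - 1 < k by omega), merge_a_le π le_rfl]
      exact hstart k hk2 (by omega)
    · rw [if_neg (by omega), merge_a_gt π h, show k - 1 + 1 = k by omega]
      exact hstart (k + 1) (by omega) (by omega)

lemma merge_util (hπ : π.Valid n c R) (hm1 : 1 ≤ m) (hm2 : m < π.K)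
    (ha : π.a m = π.a (m + 1)) : (π.merge m).Util R = π.Util R := by
  have hτ := ne_of_gt (τpos hπ hm1 hm2)
  have hnum : ∑ k ∈ Finset.Icc 1 (π.merge m).K,
      (π.merge m).τ k * (1 - (π.merge m).α k) * R ((π.merge m).a k)
      = ∑ k ∈ Finset.Icc 1 π.K, π.τ k * (1 - π.α k) * R (π.a k) := by
    have := mergeSum (fun j => π.τ j * (1 - π.α j) * R (π.a j))
      (fun j => (π.merge m).τ j * (1 - (π.merge m).α j) * R ((π.merge m).a j)) m hm1
      (fun j hj => by rw [merge_τ_lt π hj, merge_α_lt π hj, merge_a_le π hj.le])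
      (by
        rw [merge_τ_eq π m, merge_α_eq π m, merge_a_le π le_rfl, ← ha]
        field_simp
        ring)
      (fun j hj => by rw [merge_τ_gt π hj, merge_α_gt π hj, merge_a_gt π hj])
      ((π.merge m).K)
    rw [this, if_neg (by rw [merge_K]; omega), merge_K, show π.K - 1 + 1 = π.K by omega]
  have hden : (π.merge m).Tsum (π.merge m).K = π.Tsum π.K := by
    rw [merge_Tsum hm1, if_neg (by rw [merge_K]; omega), merge_K,
      show π.K - 1 + 1 = π.K by omega]
  unfold DLC.Util
  rw [hnum, hden]

end Merge

/-- Every valid dynamic linear contract can be rewritten,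
without losing principal utility, so that no two consecutive segments
prescribe the same action. -/
theorem no_repeat_rewriting (n : ℕ) (c R : ℕ → ℝ) (hInst : LinInstance n c R)
    (π : DLC) (hπ : π.Valid n c R) :
    ∃ π' : DLC, π'.Valid n c R ∧
      (∀ k, 1 ≤ k → k < π'.K → π'.a k ≠ π'.a (k + 1)) ∧
      π'.Util R ≥ π.Util R := by
  obtain ⟨N, hN⟩ : ∃ N, π.K = N := ⟨_, rfl⟩
  induction N using Nat.strong_induction_on generalizing π with
  | _ N ih =>
    by_cases hrep : ∀ k, 1 ≤ k → k < π.K → π.a k ≠ π.a (k + 1)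
    · exact ⟨π, hπ, hrep, le_refl _⟩
    · push_neg at hrep
      obtain ⟨m, hm1, hm2, ha⟩ := hrep
      obtain ⟨π'', hv, hnr, hu⟩ := ih (π.K - 1) (by omega) (π.merge m)
        (merge_valid hπ hm1 hm2 ha) rfl
      exact ⟨π'', hv, hnr, le_trans (le_of_eq (merge_util hπ hm1 hm2 ha).symm) hu⟩
end

section
/- Let π = ((α^1, τ^1, a^1), …, (α^K, τ^K, a^K)) be a valid dynamic linear contract and suppose that during segment k the agent is indifferent between actions i and i+1, i.e., {i, i+1} ⊆ BR(ᾱ^{k−1}) ∩ BR(ᾱ^k) if k ≥ 2 (respectively {i, i+1} ⊆ BR(ᾱ^1) if k = 1), and that a^k = i. Then the sequence π′ obtained from π by replacing a^k with i+1 is a valid dynamic linear contract and Util(π′) ≥ Util(π). -/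
open Finset

private lemma indiff_le_one_of (n : ℕ) (c R : ℕ → ℝ) (hInst : LinInstance n c R)
    (i : ℕ) (hi : 1 ≤ i) (hin : i + 1 ≤ n) : indiff c R i ≤ 1 := by
  obtain ⟨hn2, -, -, -, -, -, hmono, hlast⟩ := hInst
  have key : ∀ b, i ≤ b → b ≤ n - 1 → indiff c R i ≤ indiff c R b := by
    intro b
    induction b with
    | zero => intro h1 _; exact absurd (hi.trans h1) (by omega)
    | succ b ih =>
      intro h1 h2
      rcases Nat.eq_or_lt_of_le h1 with he | hlt
      · rw [he]
      · have hib : i ≤ b := Nat.lt_succ_iff.mp hlt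
        exact (ih hib (by omega)).trans
          (le_of_lt (hmono b (le_trans hi hib) h2))
  exact le_trans (key (n - 1) (by omega) le_rfl) hlast

private lemma avg_eq_indiff_of_both (n : ℕ) (c R : ℕ → ℝ) (hInst : LinInstance n c R)
    (i : ℕ) (x : ℝ) (h1 : i ∈ BR n c R x) (h2 : i + 1 ∈ BR n c R x) :
    x = indiff c R i := by
  obtain ⟨hn2, -, -, -, hR, -, -, -⟩ := hInst
  have hi1 : 1 ≤ i := (Finset.mem_Icc.mp h1.1).1
  have hin : i + 1 ≤ n := (Finset.mem_Icc.mp h2.1).2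
  have hRlt : R i < R (i + 1) := hR i hi1 (by omega)
  have ha := h1.2 (i + 1) h2.1
  have hb := h2.2 i h1.1
  have hx : x * (R (i + 1) - R i) = c (i + 1) - c i := by
    rw [mul_sub]; linarith
  rw [indiff, eq_div_iff (by linarith : R (i + 1) - R i ≠ 0)]
  exact hx

/-- If during segment `k₀` the agent is indifferent between
actions `i` and `i+1` and plays `a^{k₀} = i`, then replacing `a^{k₀}` by `i+1`
yields a valid dynamic linear contract with at least the same principal utility. -/
theorem indifference_prefers_higher_action (n : ℕ) (c R : ℕ → ℝ)
    (hInst : LinInstance n c R) (π : DLC) (hπ : π.Valid n c R)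
    (k₀ i : ℕ) (hk₀ : k₀ ∈ Finset.Icc 1 π.K)
    (hcur : i ∈ BR n c R (π.avg k₀) ∧ i + 1 ∈ BR n c R (π.avg k₀))
    (hprev : 2 ≤ k₀ →
      i ∈ BR n c R (π.avg (k₀ - 1)) ∧ i + 1 ∈ BR n c R (π.avg (k₀ - 1)))
    (ha : π.a k₀ = i) :
    let π' : DLC := ⟨π.K, π.α, π.τ, fun k => if k = k₀ then i + 1 else π.a k⟩
    π'.Valid n c R ∧ π'.Util R ≥ π.Util R := by
  intro π'
  obtain ⟨hK1, hbasic, hend, hbeg⟩ := hπ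
  have hk₀' := Finset.mem_Icc.mp hk₀
  have hi1 : 1 ≤ i := (Finset.mem_Icc.mp hcur.1.1).1
  have hin : i + 1 ≤ n := (Finset.mem_Icc.mp hcur.2.1).2
  have hRlt : R i < R (i + 1) := hInst.2.2.2.2.1 i hi1 (by omega)
  -- the average after segment k₀ equals the indifference point
  have hxk : π.avg k₀ = indiff c R i :=
    avg_eq_indiff_of_both n c R hInst i _ hcur.1 hcur.2
  -- positivity of partial durations
  have hτpos : ∀ k ∈ Finset.Icc 1 π.K, 0 < π.τ k := fun k hk => (hbasic k hk).2.1
  have hT : ∀ k, 1 ≤ k → k ≤ π.K → 0 < π.Tsum k := by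
    intro k h1 h2
    refine Finset.sum_pos (fun j hj => ?_) ⟨1, Finset.mem_Icc.mpr ⟨le_rfl, h1⟩⟩
    have := Finset.mem_Icc.mp hj
    exact hτpos j (Finset.mem_Icc.mpr ⟨this.1, this.2.trans h2⟩)
  obtain ⟨m, rfl⟩ : ∃ m, k₀ = m + 1 := ⟨k₀ - 1, by omega⟩
  have hTk : 0 < π.Tsum (m + 1) := hT (m + 1) hk₀'.1 hk₀'.2
  have hτk : 0 < π.τ (m + 1) := hτpos (m + 1) hk₀
  -- cumulative sums split at segment k₀
  have hAsplit : π.Asum (m + 1) = π.Asum m + π.α (m + 1) * π.τ (m + 1) :=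
    Finset.sum_Icc_succ_top (by omega) _
  have hTsplit : π.Tsum (m + 1) = π.Tsum m + π.τ (m + 1) :=
    Finset.sum_Icc_succ_top (by omega) _
  have hAk : π.Asum (m + 1) = π.avg (m + 1) * π.Tsum (m + 1) := by
    rw [DLC.avg, div_mul_cancel₀ _ (ne_of_gt hTk)]
  have hAm : π.Asum m = π.avg (m + 1) * π.Tsum m := by
    rcases Nat.eq_zero_or_pos m with hm0 | hm1
    · subst hm0
      simp [DLC.Asum, DLC.Tsum]
    · have hk2 : 2 ≤ m + 1 := by omega
      have hp := hprev hk2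
      have hxm : π.avg (m + 1 - 1) = indiff c R i :=
        avg_eq_indiff_of_both n c R hInst i _ hp.1 hp.2
      simp only [Nat.add_sub_cancel] at hxm
      have hTm : 0 < π.Tsum m := hT m hm1 (by omega)
      have : π.Asum m = π.avg m * π.Tsum m := by
        rw [DLC.avg, div_mul_cancel₀ _ (ne_of_gt hTm)]
      rw [this, hxm, hxk]
  -- hence the scalar on segment k₀ equals the average
  have hα : π.α (m + 1) = π.avg (m + 1) := by
    rw [hAsplit, hTsplit, mul_add, hAm] at hAk
    have h1 : π.α (m + 1) * π.τ (m + 1) = π.avg (m + 1) * π.τ (m + 1) := by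
      linarith
    exact mul_right_cancel₀ (ne_of_gt hτk) h1
  have hα1 : π.α (m + 1) ≤ 1 := by
    rw [hα, hxk]
    exact indiff_le_one_of n c R hInst i hi1 hin
  constructor
  · -- validity of π'
    refine ⟨hK1, ?_, ?_, ?_⟩
    · intro k hk
      refine ⟨(hbasic k hk).1, (hbasic k hk).2.1, ?_⟩
      show (if k = m + 1 then i + 1 else π.a k) ∈ Finset.Icc 1 n
      split_ifs
      · exact hcur.2.1
      · exact (hbasic k hk).2.2
    · intro k hk
      show (if k = m + 1 then i + 1 else π.a k) ∈ BR n c R (π.avg k)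
      split_ifs with h
      · rw [h]; exact hcur.2
      · exact hend k hk
    · intro k h2 hK
      show (if k = m + 1 then i + 1 else π.a k) ∈ BR n c R (π.avg (k - 1))
      split_ifs with h
      · rw [h]; exact (hprev (h ▸ h2)).2
      · exact hbeg k h2 hK
  · -- utility comparison
    show (∑ k ∈ Finset.Icc 1 π.K,
        π.τ k * (1 - π.α k) * R (if k = m + 1 then i + 1 else π.a k)) / π.Tsum π.K
        ≥ (∑ k ∈ Finset.Icc 1 π.K, π.τ k * (1 - π.α k) * R (π.a k)) / π.Tsum π.K
    have hTK : 0 < π.Tsum π.K := hT π.K hK1 le_rfl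
    rw [ge_iff_le]
    refine div_le_div_of_nonneg_right ?_ hTK.le
    refine Finset.sum_le_sum (fun k hk => ?_)
    split_ifs with h
    · subst h
      rw [ha]
      have h1 : 0 ≤ 1 - π.α (m + 1) := by linarith
      exact mul_le_mul_of_nonneg_left (le_of_lt hRlt)
        (mul_nonneg (le_of_lt hτk) h1)
    · exact le_rfl
end

section
/- For every valid dynamic linear contract π there exists a valid dynamic linear contract π′ = ((α′^k, τ′^k, a′^k))_{k=1}^{K′} with Util(π′) ≥ Util(π) whose actions form a consecutively decreasing sequence, i.e., a′^k = a′^1 − (k−1) for every 1 ≤ k ≤ K′. -/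
open Finset

section Aux
variable {n : ℕ} {c R : ℕ → ℝ}

lemma R_lt (h : LinInstance n c R) {p : ℕ} (h1 : 1 ≤ p) (h2 : p < n) :
    R p < R (p + 1) := h.2.2.2.2.1 p h1 h2

lemma R_mono (h : LinInstance n c R) {p q : ℕ} (h1 : 1 ≤ p) (hpq : p ≤ q) (hq : q ≤ n) :
    R p ≤ R q := by
  induction q, hpq using Nat.le_induction with
  | base => exact le_refl _
  | succ q hq' ih =>
      exact le_trans (ih (by omega)) (le_of_lt (R_lt h (by omega) (by omega)))

lemma R_nonneg (h : LinInstance n c R) {p : ℕ} (h1 : 1 ≤ p) (hp : p ≤ n) : 0 ≤ R p :=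
  le_trans h.2.2.1 (R_mono h le_rfl h1 hp)

lemma indiff_strictmono (h : LinInstance n c R) :
    ∀ q, q ≤ n - 1 → ∀ p, 1 ≤ p → p < q → indiff c R p < indiff c R q := by
  intro q
  induction q with
  | zero => intro _ p _ hp; omega
  | succ q ih =>
      intro hq p h1 hpq
      rcases Nat.lt_succ_iff_lt_or_eq.mp hpq with hlt | heq
      · exact lt_trans (ih (by omega) p h1 hlt) (h.2.2.2.2.2.2.1 q (by omega) hq)
      · subst heq; exact h.2.2.2.2.2.2.1 p h1 hq

lemma indiff_le_one (h : LinInstance n c R) {p : ℕ} (h1 : 1 ≤ p) (hp : p ≤ n - 1) :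
    indiff c R p ≤ 1 := by
  rcases eq_or_lt_of_le hp with heq | hlt
  · rw [heq]; exact h.2.2.2.2.2.2.2
  · exact le_trans (le_of_lt (indiff_strictmono h (n-1) le_rfl p h1 hlt)) h.2.2.2.2.2.2.2

lemma BR_mem_le (h : LinInstance n c R) {x : ℝ} {p : ℕ}
    (hp : p ∈ BR n c R x) (hpn : p + 1 ≤ n) : x ≤ indiff c R p := by
  obtain ⟨hpi, hbest⟩ := hp
  simp only [Finset.mem_Icc] at hpi
  have h2 := hbest (p+1) (by simp [Finset.mem_Icc]; omega)
  have hR : R p < R (p + 1) := R_lt h hpi.1 (by omega)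
  rw [indiff, le_div_iff₀ (by linarith)]
  linarith

lemma BR_mem_ge (h : LinInstance n c R) {x : ℝ} {p : ℕ}
    (hp : p ∈ BR n c R x) (hp2 : 2 ≤ p) : indiff c R (p - 1) ≤ x := by
  obtain ⟨hpi, hbest⟩ := hp
  simp only [Finset.mem_Icc] at hpi
  have h2 := hbest (p-1) (by simp [Finset.mem_Icc]; omega)
  have hR : R (p-1) < R (p - 1 + 1) := R_lt h (by omega) (by omega)
  have hp1 : p - 1 + 1 = p := by omega
  rw [hp1] at hR
  rw [indiff, hp1, div_le_iff₀ (by linarith)]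
  linarith

lemma BR_close (h : LinInstance n c R) {x : ℝ} {p q : ℕ}
    (hp : p ∈ BR n c R x) (hq : q ∈ BR n c R x) : q ≤ p + 1 := by
  by_contra hc
  push_neg at hc
  have hpi := hp.1; have hqi := hq.1
  simp only [Finset.mem_Icc] at hpi hqi
  have hx1 : x ≤ indiff c R p := BR_mem_le h hp (by omega)
  have hx2 : indiff c R (q-1) ≤ x := BR_mem_ge h hq (by omega)
  have : indiff c R p < indiff c R (q-1) :=
    indiff_strictmono h (q-1) (by omega) p hpi.1 (by omega)
  linarith

lemma BR_both (h : LinInstance n c R) {x : ℝ} {p : ℕ}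
    (hp : p ∈ BR n c R x) (hq : (p+1) ∈ BR n c R x) : x = indiff c R p := by
  have hqi := hq.1
  have hpi := hp.1
  simp only [Finset.mem_Icc] at hqi hpi
  have h1 : x ≤ indiff c R p := BR_mem_le h hp (by omega)
  have h2 : indiff c R (p + 1 - 1) ≤ x := BR_mem_ge h hq (by omega)
  simp only [Nat.add_sub_cancel] at h2
  linarith

end Aux

section DLCAux
variable {n : ℕ} {c R : ℕ → ℝ}

/-- Principal-utility numerator of the first `k` segments. -/
noncomputable def Nsum (R : ℕ → ℝ) (π : DLC) (k : ℕ) : ℝ :=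
  ∑ j ∈ Finset.Icc 1 k, π.τ j * (1 - π.α j) * R (π.a j)

lemma Tsum_succ (π : DLC) (k : ℕ) : π.Tsum (k+1) = π.Tsum k + π.τ (k+1) :=
  Finset.sum_Icc_succ_top (by omega) _

lemma Asum_succ (π : DLC) (k : ℕ) : π.Asum (k+1) = π.Asum k + π.α (k+1) * π.τ (k+1) :=
  Finset.sum_Icc_succ_top (by omega) _

lemma Nsum_succ (π : DLC) (k : ℕ) :
    Nsum R π (k+1) = Nsum R π k + π.τ (k+1) * (1 - π.α (k+1)) * R (π.a (k+1)) :=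
  Finset.sum_Icc_succ_top (by omega) _

lemma Tsum_congr {π π' : DLC} {k : ℕ} (h : ∀ j, 1 ≤ j → j ≤ k → π'.τ j = π.τ j) :
    π'.Tsum k = π.Tsum k := by
  refine Finset.sum_congr rfl ?_
  intro j hj; simp only [Finset.mem_Icc] at hj; exact h j hj.1 hj.2

lemma Asum_congr {π π' : DLC} {k : ℕ}
    (hτ : ∀ j, 1 ≤ j → j ≤ k → π'.τ j = π.τ j)
    (hα : ∀ j, 1 ≤ j → j ≤ k → π'.α j = π.α j) :
    π'.Asum k = π.Asum k := by
  refine Finset.sum_congr rfl ?_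
  intro j hj; simp only [Finset.mem_Icc] at hj
  rw [hτ j hj.1 hj.2, hα j hj.1 hj.2]

lemma Nsum_congr {π π' : DLC} {k : ℕ}
    (hτ : ∀ j, 1 ≤ j → j ≤ k → π'.τ j = π.τ j)
    (hα : ∀ j, 1 ≤ j → j ≤ k → π'.α j = π.α j)
    (ha : ∀ j, 1 ≤ j → j ≤ k → π'.a j = π.a j) :
    Nsum R π' k = Nsum R π k := by
  refine Finset.sum_congr rfl ?_
  intro j hj; simp only [Finset.mem_Icc] at hj
  rw [hτ j hj.1 hj.2, hα j hj.1 hj.2, ha j hj.1 hj.2]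

lemma Tsum_pos {π : DLC} {k : ℕ} (hk : 1 ≤ k)
    (hpos : ∀ j, 1 ≤ j → j ≤ k → 0 < π.τ j) : 0 < π.Tsum k := by
  refine Finset.sum_pos ?_ ⟨1, by simp [Finset.mem_Icc]; omega⟩
  intro j hj; simp only [Finset.mem_Icc] at hj; exact hpos j hj.1 hj.2

lemma Asum_nonneg {π : DLC} {k : ℕ}
    (hpos : ∀ j, 1 ≤ j → j ≤ k → 0 ≤ π.α j ∧ 0 < π.τ j) : 0 ≤ π.Asum k := by
  refine Finset.sum_nonneg ?_
  intro j hj; simp only [Finset.mem_Icc] at hj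
  exact mul_nonneg (hpos j hj.1 hj.2).1 (le_of_lt (hpos j hj.1 hj.2).2)

lemma DLC.Valid.τ_pos {π : DLC} (hV : π.Valid n c R) {j : ℕ} (h1 : 1 ≤ j) (h2 : j ≤ π.K) :
    0 < π.τ j := (hV.2.1 j (by simp [Finset.mem_Icc]; omega)).2.1

lemma DLC.Valid.α_nonneg {π : DLC} (hV : π.Valid n c R) {j : ℕ} (h1 : 1 ≤ j) (h2 : j ≤ π.K) :
    0 ≤ π.α j := (hV.2.1 j (by simp [Finset.mem_Icc]; omega)).1

lemma DLC.Valid.a_mem {π : DLC} (hV : π.Valid n c R) {j : ℕ} (h1 : 1 ≤ j) (h2 : j ≤ π.K) :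
    π.a j ∈ Finset.Icc 1 n := (hV.2.1 j (by simp [Finset.mem_Icc]; omega)).2.2

lemma DLC.Valid.Tsum_pos' {π : DLC} (hV : π.Valid n c R) {k : ℕ} (h1 : 1 ≤ k) (h2 : k ≤ π.K) :
    0 < π.Tsum k :=
  Tsum_pos h1 (fun j hj1 hj2 => hV.τ_pos hj1 (le_trans hj2 h2))

lemma DLC.Valid.Asum_nonneg' {π : DLC} (hV : π.Valid n c R) {k : ℕ} (h2 : k ≤ π.K) :
    0 ≤ π.Asum k :=
  Asum_nonneg (fun j hj1 hj2 => ⟨hV.α_nonneg hj1 (le_trans hj2 h2), hV.τ_pos hj1 (le_trans hj2 h2)⟩)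

lemma avg_mul_Tsum {π : DLC} {k : ℕ} (h : π.Tsum k ≠ 0) :
    π.avg k * π.Tsum k = π.Asum k := div_mul_cancel₀ _ h

lemma DLC.Valid.BR_end {π : DLC} (hV : π.Valid n c R) {k : ℕ} (h1 : 1 ≤ k) (h2 : k ≤ π.K) :
    π.a k ∈ BR n c R (π.avg k) := hV.2.2.1 k (by simp [Finset.mem_Icc]; omega)

lemma DLC.Valid.BR_start {π : DLC} (hV : π.Valid n c R) {k : ℕ} (h1 : 2 ≤ k) (h2 : k ≤ π.K) :
    π.a k ∈ BR n c R (π.avg (k-1)) := hV.2.2.2 k h1 h2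


/-- One-segment contract. -/
noncomputable def oneSeg (x t : ℝ) (i : ℕ) : DLC := ⟨1, fun _ => x, fun _ => t, fun _ => i⟩

@[simp] lemma oneSeg_K {x t : ℝ} {i : ℕ} : (oneSeg x t i).K = 1 := rfl
@[simp] lemma oneSeg_α {x t : ℝ} {i m : ℕ} : (oneSeg x t i).α m = x := rfl
@[simp] lemma oneSeg_τ {x t : ℝ} {i m : ℕ} : (oneSeg x t i).τ m = t := rfl
@[simp] lemma oneSeg_a {x t : ℝ} {i m : ℕ} : (oneSeg x t i).a m = i := rfl

lemma Tsum_one (π : DLC) : π.Tsum 1 = π.τ 1 := by simp [DLC.Tsum]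
lemma Asum_one (π : DLC) : π.Asum 1 = π.α 1 * π.τ 1 := by simp [DLC.Asum]
lemma Nsum_one (π : DLC) : Nsum R π 1 = π.τ 1 * (1 - π.α 1) * R (π.a 1) := by simp [Nsum]

lemma avg_one {π : DLC} (h : π.τ 1 ≠ 0) : π.avg 1 = π.α 1 := by
  rw [DLC.avg, Tsum_one, Asum_one, mul_div_assoc, div_self h, mul_one]

lemma oneSeg_valid {x t : ℝ} {i : ℕ} (hx : 0 ≤ x) (ht : 0 < t)
    (hi : i ∈ Finset.Icc 1 n) (hBR : i ∈ BR n c R x) : (oneSeg x t i).Valid n c R := by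
  have havg : (oneSeg x t i).avg 1 = x := avg_one (ne_of_gt ht)
  refine ⟨le_rfl, ?_, ?_, ?_⟩
  · intro m hm
    exact ⟨hx, ht, hi⟩
  · intro m hm
    simp only [Finset.mem_Icc, oneSeg_K] at hm
    have hm1 : m = 1 := by omega
    subst hm1
    rw [havg]
    exact hBR
  · intro m h2 h1
    rw [oneSeg_K] at h1
    omega


/-- Replace everything from segment `m+1` on by a single final segment. -/
noncomputable def extend (π : DLC) (m : ℕ) (x t : ℝ) (i : ℕ) : DLC :=
  ⟨m + 1, Function.update π.α (m+1) x, Function.update π.τ (m+1) t,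
    Function.update π.a (m+1) i⟩

variable {σ : DLC} {m : ℕ} {x t : ℝ} {i : ℕ}

@[simp] lemma extend_K : (extend σ m x t i).K = m + 1 := rfl

lemma extend_α_ne {j : ℕ} (h : j ≠ m + 1) : (extend σ m x t i).α j = σ.α j :=
  Function.update_of_ne h _ _
lemma extend_τ_ne {j : ℕ} (h : j ≠ m + 1) : (extend σ m x t i).τ j = σ.τ j :=
  Function.update_of_ne h _ _
lemma extend_a_ne {j : ℕ} (h : j ≠ m + 1) : (extend σ m x t i).a j = σ.a j :=
  Function.update_of_ne h _ _
lemma extend_α_top : (extend σ m x t i).α (m+1) = x := Function.update_self _ _ _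
lemma extend_τ_top : (extend σ m x t i).τ (m+1) = t := Function.update_self _ _ _
lemma extend_a_top : (extend σ m x t i).a (m+1) = i := Function.update_self _ _ _

lemma extend_Tsum_le {j : ℕ} (h : j ≤ m) : (extend σ m x t i).Tsum j = σ.Tsum j :=
  Tsum_congr (fun j' _ h2 => extend_τ_ne (by omega))

lemma extend_Asum_le {j : ℕ} (h : j ≤ m) : (extend σ m x t i).Asum j = σ.Asum j :=
  Asum_congr (fun j' _ h2 => extend_τ_ne (by omega)) (fun j' _ h2 => extend_α_ne (by omega))

lemma extend_Nsum_le {j : ℕ} (h : j ≤ m) : Nsum R (extend σ m x t i) j = Nsum R σ j :=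
  Nsum_congr (fun j' _ h2 => extend_τ_ne (by omega)) (fun j' _ h2 => extend_α_ne (by omega))
    (fun j' _ h2 => extend_a_ne (by omega))

lemma extend_avg_le {j : ℕ} (h : j ≤ m) : (extend σ m x t i).avg j = σ.avg j := by
  rw [DLC.avg, DLC.avg, extend_Tsum_le h, extend_Asum_le h]

lemma extend_Tsum_top : (extend σ m x t i).Tsum (m+1) = σ.Tsum m + t := by
  rw [Tsum_succ, extend_Tsum_le le_rfl, extend_τ_top]

lemma extend_Asum_top : (extend σ m x t i).Asum (m+1) = σ.Asum m + x * t := by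
  rw [Asum_succ, extend_Asum_le le_rfl, extend_α_top, extend_τ_top]

lemma extend_Nsum_top :
    Nsum R (extend σ m x t i) (m+1) = Nsum R σ m + t * (1 - x) * R i := by
  rw [Nsum_succ, extend_Nsum_le le_rfl, extend_α_top, extend_τ_top, extend_a_top]

lemma extend_valid (hσV : σ.Valid n c R) (hm : m ≤ σ.K) (hx : 0 ≤ x) (ht : 0 < t)
    (hi : i ∈ Finset.Icc 1 n)
    (hBRend : i ∈ BR n c R ((extend σ m x t i).avg (m+1)))
    (hBRstart : 1 ≤ m → i ∈ BR n c R (σ.avg m)) :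
    (extend σ m x t i).Valid n c R := by
  refine ⟨by rw [extend_K]; omega, ?_, ?_, ?_⟩
  · intro j hj
    simp only [Finset.mem_Icc, extend_K] at hj
    rcases Nat.lt_or_ge j (m+1) with hlt | hge
    · rw [extend_α_ne (by omega), extend_τ_ne (by omega), extend_a_ne (by omega)]
      exact hσV.2.1 j (by simp only [Finset.mem_Icc]; omega)
    · have hj' : j = m + 1 := by omega
      subst hj'
      rw [extend_α_top, extend_τ_top, extend_a_top]
      exact ⟨hx, ht, hi⟩
  · intro j hj
    simp only [Finset.mem_Icc, extend_K] at hj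
    rcases Nat.lt_or_ge j (m+1) with hlt | hge
    · rw [extend_a_ne (by omega), extend_avg_le (by omega)]
      exact hσV.2.2.1 j (by simp only [Finset.mem_Icc]; omega)
    · have hj' : j = m + 1 := by omega
      subst hj'
      rw [extend_a_top]
      exact hBRend
  · intro j h2 hj
    rw [extend_K] at hj
    rcases Nat.lt_or_ge j (m+1) with hlt | hge
    · rw [extend_a_ne (by omega)]
      have hji : j - 1 ≤ m := by omega
      rw [show (extend σ m x t i).avg (j-1) = σ.avg (j-1) from extend_avg_le hji]
      exact hσV.2.2.2 j h2 (by omega)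
    · have hj' : j = m + 1 := by omega
      subst hj'
      rw [extend_a_top]
      have hm1 : m + 1 - 1 = m := rfl
      rw [hm1, extend_avg_le le_rfl]
      exact hBRstart (by omega)

lemma extend_dec
    (hσDec : ∀ mm, 1 ≤ mm → mm ≤ σ.K → (σ.a mm : ℤ) = (σ.a 1 : ℤ) - ((mm : ℤ) - 1))
    (hmK : m ≤ σ.K) (hrel : (i : ℤ) = (σ.a 1 : ℤ) - m) :
    ∀ mm, 1 ≤ mm → mm ≤ (extend σ m x t i).K →
      ((extend σ m x t i).a mm : ℤ) = ((extend σ m x t i).a 1 : ℤ) - ((mm : ℤ) - 1) := by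
  intro mm h1 h2
  rw [extend_K] at h2
  rcases Nat.eq_zero_or_pos m with hm0 | hm1
  · subst hm0
    have hmm : mm = 1 := by omega
    subst hmm
    simp
  · have ha1 : (extend σ m x t i).a 1 = σ.a 1 := extend_a_ne (by omega)
    rcases Nat.lt_or_ge mm (m+1) with hlt | hge
    · rw [ha1, extend_a_ne (by omega)]
      exact hσDec mm h1 (by omega)
    · have hmm : mm = m + 1 := by omega
      subst hmm
      rw [ha1, extend_a_top]
      push_cast
      rw [hrel]
      ring

end DLCAux



lemma main_ind {n : ℕ} {c R : ℕ → ℝ} (hInst : LinInstance n c R) (π : DLC)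
    (hπ : π.Valid n c R) :
    ∀ k, 1 ≤ k → k ≤ π.K → ∃ π' : DLC,
      π'.Valid n c R ∧
      (∀ m, 1 ≤ m → m ≤ π'.K → (π'.a m : ℤ) = (π'.a 1 : ℤ) - ((m : ℤ) - 1)) ∧
      π'.Tsum π'.K = π.Tsum k ∧
      π'.Asum π'.K = π.Asum k ∧
      π'.a π'.K = π.a k ∧
      Nsum R π k ≤ Nsum R π' π'.K := by
  intro k
  induction k with
  | zero => omega
  | succ k ih =>
    intro _ hkK
    rcases Nat.eq_zero_or_pos k with hk0 | hk1
    · -- base case: one segment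
      subst hk0
      have hτ1 : 0 < π.τ 1 := hπ.τ_pos le_rfl hkK
      have hα1 : 0 ≤ π.α 1 := hπ.α_nonneg le_rfl hkK
      have ha1 : π.a 1 ∈ Finset.Icc 1 n := hπ.a_mem le_rfl hkK
      have havg1 : π.avg 1 = π.α 1 := avg_one (ne_of_gt hτ1)
      have hBR1 : π.a 1 ∈ BR n c R (π.α 1) := by
        rw [← havg1]; exact hπ.BR_end le_rfl hkK
      refine ⟨oneSeg (π.α 1) (π.τ 1) (π.a 1), oneSeg_valid hα1 hτ1 ha1 hBR1, ?_, ?_, ?_, ?_, ?_⟩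
      · intro m h1 h2
        rw [oneSeg_K] at h2
        have : m = 1 := by omega
        subst this
        simp
      · rw [oneSeg_K, Tsum_one, Tsum_one]; rfl
      · rw [oneSeg_K, Asum_one, Asum_one]; rfl
      · rfl
      · rw [oneSeg_K, Nsum_one, Nsum_one]; simp
    · -- inductive step
      obtain ⟨σ, hσV, hσDec, hσT, hσA, hσa, hσN⟩ := ih hk1 (by omega)
      have hKσ : 1 ≤ σ.K := hσV.1
      have hkK' : k ≤ π.K := by omega
      have hacK : π.a (k+1) ∈ BR n c R (π.avg (k+1)) := hπ.BR_end (by omega) hkK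
      have hacprev : π.a (k+1) ∈ BR n c R (π.avg k) := by
        have h := hπ.BR_start (k := k+1) (by omega) hkK
        simpa using h
      have hakk : π.a k ∈ BR n c R (π.avg k) := hπ.BR_end hk1 hkK'
      have hclose1 : π.a (k+1) ≤ π.a k + 1 := BR_close hInst hakk hacprev
      have hclose2 : π.a k ≤ π.a (k+1) + 1 := BR_close hInst hacprev hakk
      have hτc : 0 < π.τ (k+1) := hπ.τ_pos (by omega) hkK
      have hαc : 0 ≤ π.α (k+1) := hπ.α_nonneg (by omega) hkK
      have hacmem : π.a (k+1) ∈ Finset.Icc 1 n := hπ.a_mem (by omega) hkK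
      have hakmem : π.a k ∈ Finset.Icc 1 n := hπ.a_mem (by omega) hkK'
      have hσavg : σ.avg σ.K = π.avg k := by
        rw [DLC.avg, DLC.avg, hσT, hσA]
      rcases Nat.lt_trichotomy (π.a (k+1)) (π.a k) with hlt | heq | hgt
      · -- descent: append the new segment
        have hrel : (π.a (k+1) : ℤ) = (σ.a 1 : ℤ) - σ.K := by
          have h1 := hσDec σ.K hKσ le_rfl
          rw [hσa] at h1
          have hge1 : 1 ≤ π.a (k+1) := by
            simp only [Finset.mem_Icc] at hacmem; exact hacmem.1
          omega
        have havgtop : (extend σ σ.K (π.α (k+1)) (π.τ (k+1)) (π.a (k+1))).avg (σ.K + 1)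
            = π.avg (k+1) := by
          rw [DLC.avg, extend_Tsum_top, extend_Asum_top, hσT, hσA, DLC.avg,
            Tsum_succ, Asum_succ]
        refine ⟨extend σ σ.K (π.α (k+1)) (π.τ (k+1)) (π.a (k+1)), ?_, ?_, ?_, ?_, ?_, ?_⟩
        · refine extend_valid hσV le_rfl hαc hτc hacmem ?_ ?_
          · rw [havgtop]; exact hacK
          · intro _
            rw [hσavg]; exact hacprev
        · exact extend_dec hσDec le_rfl hrel
        · rw [extend_K, extend_Tsum_top, hσT, Tsum_succ]
        · rw [extend_K, extend_Asum_top, hσA, Asum_succ]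
        · rw [extend_K, extend_a_top]
        · rw [extend_K, extend_Nsum_top, Nsum_succ]
          have := hσN
          linarith
      · -- same action: merge into the last segment
        obtain ⟨m0, hK⟩ : ∃ m0, σ.K = m0 + 1 := ⟨σ.K - 1, by omega⟩
        rw [hK] at hσT hσA hσa hσN hσavg
        have hτb : 0 < σ.τ (m0+1) := hσV.τ_pos (by omega) (by omega)
        have hαb : 0 ≤ σ.α (m0+1) := hσV.α_nonneg (by omega) (by omega)
        have hnewt : 0 < σ.τ (m0+1) + π.τ (k+1) := by linarith
        set newx : ℝ := (σ.α (m0+1) * σ.τ (m0+1) + π.α (k+1) * π.τ (k+1)) /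
          (σ.τ (m0+1) + π.τ (k+1)) with hnewx
        have hnewx0 : 0 ≤ newx := by
          apply div_nonneg _ hnewt.le
          have := mul_nonneg hαb hτb.le
          have := mul_nonneg hαc hτc.le
          linarith
        have hmul : newx * (σ.τ (m0+1) + π.τ (k+1))
            = σ.α (m0+1) * σ.τ (m0+1) + π.α (k+1) * π.τ (k+1) :=
          div_mul_cancel₀ _ (ne_of_gt hnewt)
        have hTtop : (extend σ m0 newx (σ.τ (m0+1) + π.τ (k+1)) (π.a k)).Tsum (m0+1)
            = π.Tsum (k+1) := by
          rw [extend_Tsum_top, Tsum_succ, ← hσT, Tsum_succ]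
          ring
        have hAtop : (extend σ m0 newx (σ.τ (m0+1) + π.τ (k+1)) (π.a k)).Asum (m0+1)
            = π.Asum (k+1) := by
          rw [extend_Asum_top, hmul, Asum_succ, ← hσA, Asum_succ]
          ring
        have havgtop : (extend σ m0 newx (σ.τ (m0+1) + π.τ (k+1)) (π.a k)).avg (m0+1)
            = π.avg (k+1) := by
          rw [DLC.avg, hTtop, hAtop, DLC.avg]
        have hrel : (π.a k : ℤ) = (σ.a 1 : ℤ) - m0 := by
          have h1 := hσDec (m0+1) (by omega) (by omega)
          rw [hσa] at h1
          push_cast at h1 ⊢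
          omega
        have hexp : (σ.τ (m0+1) + π.τ (k+1)) * (1 - newx)
            = σ.τ (m0+1) * (1 - σ.α (m0+1)) + π.τ (k+1) * (1 - π.α (k+1)) := by
          rw [hnewx]
          field_simp
          ring
        refine ⟨extend σ m0 newx (σ.τ (m0+1) + π.τ (k+1)) (π.a k), ?_, ?_, ?_, ?_, ?_, ?_⟩
        · refine extend_valid hσV (by omega) hnewx0 hnewt hakmem ?_ ?_
          · rw [havgtop, ← heq]; exact hacK
          · intro hm1
            have hst := hσV.BR_start (k := m0+1) (by omega) (by omega)
            have : m0 + 1 - 1 = m0 := rfl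
            rw [this, hσa] at hst
            exact hst
        · exact extend_dec hσDec (by omega) hrel
        · rw [extend_K, hTtop]
        · rw [extend_K, hAtop]
        · rw [extend_K, extend_a_top, heq]
        · rw [extend_K, extend_Nsum_top, Nsum_succ]
          rw [Nsum_succ, hσa] at hσN
          rw [hexp, heq]
          nlinarith [hσN]
      · -- ascent
        have hac_eq : π.a (k+1) = π.a k + 1 := by omega
        have hjmem : 1 ≤ π.a k ∧ π.a k ≤ n := by
          simpa [Finset.mem_Icc] using hakmem
        have hacn : π.a k + 1 ≤ n := by
          have := hacmem; simp only [Finset.mem_Icc] at this; omega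
        have hn2 : 2 ≤ n := hInst.1
        have havgk : π.avg k = indiff c R (π.a k) := by
          refine BR_both hInst hakk ?_
          rw [← hac_eq]; exact hacprev
        have hile1 : indiff c R (π.a k) ≤ 1 := indiff_le_one hInst hjmem.1 (by omega)
        have hRj : R (π.a k) ≤ R (π.a k + 1) := (R_lt hInst hjmem.1 (by omega)).le
        have hTk : 0 < π.Tsum k := hπ.Tsum_pos' hk1 hkK'
        have hAk : π.Asum k = indiff c R (π.a k) * π.Tsum k := by
          rw [← avg_mul_Tsum (ne_of_gt hTk), havgk]
        obtain ⟨m0, hK⟩ : ∃ m0, σ.K = m0 + 1 := ⟨σ.K - 1, by omega⟩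
        rw [hK] at hσT hσA hσa hσN hσavg
        rcases Nat.eq_zero_or_pos m0 with hm00 | hm01
        · -- σ has a single segment: replace it by one segment with action `π.a k + 1`
          subst hm00
          simp only [Nat.zero_add] at hσT hσA hσa hσN hσavg
          have hT1 : 0 < π.Tsum (k+1) := hπ.Tsum_pos' (by omega) hkK
          have hA1 : 0 ≤ π.Asum (k+1) := hπ.Asum_nonneg' hkK
          have havg1 : 0 ≤ π.avg (k+1) := div_nonneg hA1 hT1.le
          refine ⟨oneSeg (π.avg (k+1)) (π.Tsum (k+1)) (π.a (k+1)),
            oneSeg_valid havg1 hT1 hacmem hacK, ?_, ?_, ?_, ?_, ?_⟩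
          · intro mm h1 h2
            rw [oneSeg_K] at h2
            have : mm = 1 := by omega
            subst this
            simp
          · rw [oneSeg_K, Tsum_one]; rfl
          · rw [oneSeg_K, Asum_one]
            show π.avg (k+1) * π.Tsum (k+1) = π.Asum (k+1)
            exact avg_mul_Tsum (ne_of_gt hT1)
          · rfl
          · rw [oneSeg_K, Nsum_one]
            show Nsum R π (k+1) ≤ π.Tsum (k+1) * (1 - π.avg (k+1)) * R (π.a (k+1))
            have hA1' : π.avg (k+1) * π.Tsum (k+1) = π.Asum (k+1) :=
              avg_mul_Tsum (ne_of_gt hT1)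
            have hσ1 : Nsum R σ 1 = (π.Tsum k - π.Asum k) * R (π.a k) := by
              rw [Nsum_one, hσa]
              have h1 : σ.τ 1 = π.Tsum k := by rw [← hσT, Tsum_one]
              have h2 : σ.α 1 * σ.τ 1 = π.Asum k := by rw [← hσA, Asum_one]
              linear_combination R (π.a k) * h1 - R (π.a k) * h2
            have hTA : 0 ≤ π.Tsum k - π.Asum k := by nlinarith
            have hch : (π.Tsum k - π.Asum k) * R (π.a k)
                ≤ (π.Tsum k - π.Asum k) * R (π.a k + 1) :=
              mul_le_mul_of_nonneg_left hRj hTA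
            rw [Nsum_succ, hac_eq]
            rw [hσ1] at hσN
            have hTs := Tsum_succ π k
            have hAs := Asum_succ π k
            have e1 : π.Tsum (k+1) * (1 - π.avg (k+1))
                = (π.Tsum k - π.Asum k) + π.τ (k+1) * (1 - π.α (k+1)) := by
              rw [mul_sub, mul_one, mul_comm (π.Tsum (k+1)), hA1', hTs, hAs]
              ring
            rw [e1, add_mul]
            linarith
        · -- σ has at least two segments: fold the last two with the new one
          obtain ⟨m1, hm1⟩ : ∃ m1, m0 = m1 + 1 := ⟨m0 - 1, by omega⟩
          subst hm1
          have hτa : 0 < σ.τ (m1+1) := hσV.τ_pos (by omega) (by omega)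
          have hαa : 0 ≤ σ.α (m1+1) := hσV.α_nonneg (by omega) (by omega)
          have hτb : 0 < σ.τ (m1+2) := hσV.τ_pos (by omega) (by omega)
          have hαb : 0 ≤ σ.α (m1+2) := hσV.α_nonneg (by omega) (by omega)
          have ha_a : σ.a (m1+1) = π.a k + 1 := by
            have h1 := hσDec (m1+1) (by omega) (by omega)
            have h2 := hσDec (m1+2) (by omega) (by omega)
            rw [hσa] at h2
            omega
          have hpj1 : π.a k + 1 ∈ BR n c R (σ.avg (m1+1)) := by
            have := hσV.BR_end (k := m1+1) (by omega) (by omega)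
            rwa [ha_a] at this
          have hpj : π.a k ∈ BR n c R (σ.avg (m1+1)) := by
            have hst := hσV.BR_start (k := m1+2) (by omega) (by omega)
            have he : m1 + 2 - 1 = m1 + 1 := rfl
            rw [he, hσa] at hst
            exact hst
          have havg_mid : σ.avg (m1+1) = indiff c R (π.a k) := BR_both hInst hpj hpj1
          have hTmid : 0 < σ.Tsum (m1+1) :=
            hσV.Tsum_pos' (by omega) (by omega)
          have hAmid : σ.Asum (m1+1) = indiff c R (π.a k) * σ.Tsum (m1+1) := by
            rw [← avg_mul_Tsum (ne_of_gt hTmid), havg_mid]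
          have hAtop : σ.Asum (m1+2) = indiff c R (π.a k) * σ.Tsum (m1+2) := by
            rw [hσA, hAk, hσT]
          have hPb : σ.α (m1+2) * σ.τ (m1+2) = indiff c R (π.a k) * σ.τ (m1+2) := by
            have h1 := Asum_succ σ (m1+1)
            have h2 := Tsum_succ σ (m1+1)
            rw [h2, mul_add] at hAtop
            linarith
          have hτbnn : 0 ≤ σ.τ (m1+2) * (1 - σ.α (m1+2)) := by nlinarith
          obtain ⟨newτ, hnewτ⟩ : ∃ y : ℝ, y = σ.τ (m1+1) + σ.τ (m1+2) + π.τ (k+1) :=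
            ⟨_, rfl⟩
          obtain ⟨newP, hnewP⟩ : ∃ y : ℝ, y = σ.α (m1+1) * σ.τ (m1+1)
              + σ.α (m1+2) * σ.τ (m1+2) + π.α (k+1) * π.τ (k+1) := ⟨_, rfl⟩
          have hnewτ0 : 0 < newτ := by rw [hnewτ]; linarith
          have hnewP0 : 0 ≤ newP := by
            rw [hnewP]
            have := mul_nonneg hαa hτa.le
            have := mul_nonneg hαb hτb.le
            have := mul_nonneg hαc hτc.le
            linarith
          obtain ⟨newx, hnewxd⟩ : ∃ y : ℝ, y = newP / newτ := ⟨_, rfl⟩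
          have hnewx0 : 0 ≤ newx := hnewxd ▸ div_nonneg hnewP0 hnewτ0.le
          have hmulx : newx * newτ = newP := by
            rw [hnewxd]; exact div_mul_cancel₀ _ (ne_of_gt hnewτ0)
          have hTtop : (extend σ m1 newx newτ (π.a (k+1))).Tsum (m1+1) = π.Tsum (k+1) := by
            rw [extend_Tsum_top, Tsum_succ π, ← hσT, Tsum_succ σ (m1+1), Tsum_succ σ m1,
              hnewτ]
            ring
          have hAtop' : (extend σ m1 newx newτ (π.a (k+1))).Asum (m1+1) = π.Asum (k+1) := by
            rw [extend_Asum_top, hmulx, Asum_succ π, ← hσA, Asum_succ σ (m1+1),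
              Asum_succ σ m1, hnewP]
            ring
          have havgtop : (extend σ m1 newx newτ (π.a (k+1))).avg (m1+1) = π.avg (k+1) := by
            rw [DLC.avg, hTtop, hAtop', DLC.avg]
          have hrel : (π.a (k+1) : ℤ) = (σ.a 1 : ℤ) - m1 := by
            have h1 := hσDec (m1+1) (by omega) (by omega)
            rw [ha_a] at h1
            omega
          have hexp : newτ * (1 - newx)
              = σ.τ (m1+1) * (1 - σ.α (m1+1)) + σ.τ (m1+2) * (1 - σ.α (m1+2))
                + π.τ (k+1) * (1 - π.α (k+1)) := by
            have : newτ * (1 - newx) = newτ - newP := by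
              rw [mul_sub, mul_one, mul_comm, hmulx]
            rw [this, hnewτ, hnewP]
            ring
          have hch : σ.τ (m1+2) * (1 - σ.α (m1+2)) * R (π.a k)
              ≤ σ.τ (m1+2) * (1 - σ.α (m1+2)) * R (π.a k + 1) :=
            mul_le_mul_of_nonneg_left hRj hτbnn
          refine ⟨extend σ m1 newx newτ (π.a (k+1)), ?_, ?_, ?_, ?_, ?_, ?_⟩
          · refine extend_valid hσV (by omega) hnewx0 hnewτ0 hacmem ?_ ?_
            · rw [havgtop]; exact hacK
            · intro hm1'
              have hst := hσV.BR_start (k := m1+1) (by omega) (by omega)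
              have he : m1 + 1 - 1 = m1 := rfl
              rw [he, ha_a, ← hac_eq] at hst
              exact hst
          · exact extend_dec hσDec (by omega) hrel
          · rw [extend_K, hTtop]
          · rw [extend_K, hAtop']
          · rw [extend_K, extend_a_top]
          · rw [extend_K, extend_Nsum_top, Nsum_succ]
            rw [Nsum_succ, Nsum_succ, hσa, ha_a] at hσN
            rw [hexp, hac_eq, add_mul, add_mul]
            linarith [hch, hσN]


/-- Every valid dynamic linear contract can be rewritten,
without losing principal utility, so that its actions form a consecutively
decreasing sequence: `a'^k = a'^1 − (k − 1)`. -/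
theorem decreasing_rewriting (n : ℕ) (c R : ℕ → ℝ) (hInst : LinInstance n c R)
    (π : DLC) (hπ : π.Valid n c R) :
    ∃ π' : DLC, π'.Valid n c R ∧
      (∀ k, 1 ≤ k → k ≤ π'.K → (π'.a k : ℤ) = (π'.a 1 : ℤ) - ((k : ℤ) - 1)) ∧
      π'.Util R ≥ π.Util R := by
  obtain ⟨σ, hV, hDec, hT, _, _, hN⟩ := main_ind hInst π hπ π.K hπ.1 le_rfl
  refine ⟨σ, hV, hDec, ?_⟩
  have h1 : π.Util R = Nsum R π π.K / π.Tsum π.K := rfl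
  have h2 : σ.Util R = Nsum R σ σ.K / σ.Tsum σ.K := rfl
  have hTpos : 0 < π.Tsum π.K := hπ.Tsum_pos' hπ.1 le_rfl
  rw [ge_iff_le, h1, h2, hT]
  gcongr
end

section
/- For every valid p-scaled dynamic contract π there exists a valid free-fall p-scaled dynamic contract π′ with Util(π′) ≥ Util(π). (Free-fall contracts are optimal among p-scaled dynamic contracts.) -/
open Finset

/-- Expected reward `R_i = Σ_j F_{ij} r_j` of action `i`. -/
noncomputable def expRew (m : ℕ) (F : ℕ → ℕ → ℝ) (r : ℕ → ℝ) (i : ℕ) : ℝ :=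
  ∑ j ∈ Finset.Icc 1 m, F i j * r j

/-- Expected payment `P_i = Σ_j F_{ij} p_j` of action `i` under base contract `p`. -/
noncomputable def expPay (m : ℕ) (F : ℕ → ℕ → ℝ) (p : ℕ → ℝ) (i : ℕ) : ℝ :=
  ∑ j ∈ Finset.Icc 1 m, F i j * p j

/-- Basic assumptions of a principal-agent instance with base contract `p`. -/
def PInstance (n m : ℕ) (c : ℕ → ℝ) (F : ℕ → ℕ → ℝ) (r : ℕ → ℝ) (p : ℕ → ℝ) : Prop :=
  2 ≤ n ∧ (∀ i ∈ Finset.Icc 1 n, 0 ≤ c i) ∧ (∀ j ∈ Finset.Icc 1 m, 0 ≤ r j) ∧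
    (∀ i ∈ Finset.Icc 1 n,
      (∀ j ∈ Finset.Icc 1 m, 0 ≤ F i j) ∧ ∑ j ∈ Finset.Icc 1 m, F i j = 1) ∧
    (∀ j ∈ Finset.Icc 1 m, 0 ≤ p j)

/-- Best-response set `BR_p(x)` of the agent to the scaled contract `x·p`. -/
def BRp (n m : ℕ) (c : ℕ → ℝ) (F : ℕ → ℕ → ℝ) (p : ℕ → ℝ) (x : ℝ) : Set ℕ :=
  {i | i ∈ Finset.Icc 1 n ∧ ∀ j ∈ Finset.Icc 1 n,
    x * expPay m F p j - c j ≤ x * expPay m F p i - c i}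

/-- `β` records the breakpoints of `p`-scaled contracts: `β 0 = α_{0,1} = 0`,
`β i = α_{i,i+1}` (for `1 ≤ i ≤ n-1`), they are strictly increasing, and for
`α ≥ 0` action `i` is a best response iff `α_{i-1,i} ≤ α ≤ α_{i,i+1}`
(with `α_{n,n+1} = +∞`). -/
def Breakpoints (n m : ℕ) (c : ℕ → ℝ) (F : ℕ → ℕ → ℝ) (p : ℕ → ℝ) (β : ℕ → ℝ) : Prop :=
  β 0 = 0 ∧ (∀ i, i + 1 ≤ n - 1 → β i < β (i + 1)) ∧ (0 < β 1) ∧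
    (∀ x : ℝ, 0 ≤ x → ∀ i, 1 ≤ i → i ≤ n →
      (i ∈ BRp n m c F p x ↔ (β (i - 1) ≤ x ∧ (i < n → x ≤ β i))))

/-- A `p`-scaled dynamic contract with `K` segments (indexed `1,…,K`):
scalars `α`, durations `τ`, and actions `a`. -/
structure DSC where
  K : ℕ
  α : ℕ → ℝ
  τ : ℕ → ℝ
  a : ℕ → ℕ

namespace DSC

/-- Total duration of the first `k` segments. -/
noncomputable def Tsum (π : DSC) (k : ℕ) : ℝ := ∑ j ∈ Finset.Icc 1 k, π.τ j

/-- Time-averaged scalar `ᾱ^k` after the first `k` segments. -/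
noncomputable def avg (π : DSC) (k : ℕ) : ℝ :=
  (∑ j ∈ Finset.Icc 1 k, π.α j * π.τ j) / π.Tsum k

/-- Validity of a `p`-scaled dynamic contract. -/
def Valid (n m : ℕ) (c : ℕ → ℝ) (F : ℕ → ℕ → ℝ) (p : ℕ → ℝ) (π : DSC) : Prop :=
  1 ≤ π.K ∧
    (∀ k ∈ Finset.Icc 1 π.K, 0 ≤ π.α k ∧ 0 < π.τ k ∧ π.a k ∈ Finset.Icc 1 n) ∧
    (∀ k ∈ Finset.Icc 1 π.K, π.a k ∈ BRp n m c F p (π.avg k)) ∧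
    (∀ k, 2 ≤ k → k ≤ π.K → π.a k ∈ BRp n m c F p (π.avg (k - 1)))

/-- Time-averaged principal utility. -/
noncomputable def Util (m : ℕ) (F : ℕ → ℕ → ℝ) (r : ℕ → ℝ) (p : ℕ → ℝ) (π : DSC) : ℝ :=
  (∑ k ∈ Finset.Icc 1 π.K,
    π.τ k * (expRew m F r (π.a k) - π.α k * expPay m F p (π.a k))) / π.Tsum π.K

/-- Free-fall: the zero contract is offered on every segment after the first. -/
def FreeFall (π : DSC) : Prop := ∀ k, 2 ≤ k → k ≤ π.K → π.α k = 0

end DSC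


private noncomputable def lamFun (W : ℕ → ℝ) : ℕ → ℝ
  | 0 => W 1
  | 1 => W 1
  | (j+2) => max (lamFun W (j+1)) (W (j+2))

private lemma lamFun_succ (W : ℕ → ℝ) (j : ℕ) (h : 1 ≤ j) :
    lamFun W (j+1) = max (lamFun W j) (W (j+1)) := by
  match j, h with
  | (j'+1), _ => rfl

private lemma lamFun_mono (W : ℕ → ℝ) (j : ℕ) : lamFun W j ≤ lamFun W (j+1) := by
  match j with
  | 0 => exact le_refl _
  | (j'+1) => rw [lamFun_succ W (j'+1) (by omega)]; exact le_max_left _ _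

private lemma lamFun_ge (W : ℕ → ℝ) : ∀ j l, 1 ≤ l → l ≤ j → W l ≤ lamFun W j := by
  intro j
  induction j with
  | zero => intro l h1 h2; omega
  | succ j ih =>
    intro l h1 h2
    match j, h2 with
    | 0, _ =>
      have : l = 1 := by omega
      subst this; exact le_refl _
    | (j'+1), _ =>
      rw [lamFun_succ W (j'+1) (by omega)]
      rcases Nat.lt_or_ge l (j'+2) with h | h
      · exact le_trans (ih l h1 (by omega)) (le_max_left _ _)
      · have : l = j'+2 := by omega
        subst this; exact le_max_right _ _

private lemma lamFun_ge_one (W : ℕ → ℝ) (j : ℕ) : W 1 ≤ lamFun W j := by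
  match j with
  | 0 => exact le_refl _
  | (j'+1) => exact lamFun_ge W (j'+1) 1 (by omega) (by omega)

private lemma lamFun_le (W : ℕ → ℝ) (b : ℝ) :
    ∀ j, (∀ l, 1 ≤ l → l ≤ max j 1 → W l ≤ b) → lamFun W j ≤ b := by
  intro j
  induction j with
  | zero => intro h; exact h 1 (by omega) (by omega)
  | succ j ih =>
    intro h
    match j with
    | 0 => exact h 1 (by omega) (by omega)
    | (j'+1) =>
      rw [lamFun_succ W (j'+1) (by omega)]
      refine max_le (ih ?_) (h (j'+2) (by omega) (by omega))
      intro l h1 h2; exact h l h1 (by omega)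

private noncomputable def botMax (S : ℕ → ℝ) (n : ℕ) : ℕ → ℝ
  | 0 => S n
  | (t+1) => max (S (n - (t+1))) (botMax S n t)

private noncomputable def Mfun (S : ℕ → ℝ) (n j : ℕ) : ℝ := botMax S n (n - j)

private lemma Mfun_top (S : ℕ → ℝ) (n : ℕ) : Mfun S n n = S n := by
  simp [Mfun, botMax]

private lemma Mfun_rec (S : ℕ → ℝ) (n : ℕ) : ∀ j, j < n →
    Mfun S n j = max (S j) (Mfun S n (j+1)) := by
  intro j hj
  have h1 : n - j = (n - (j+1)) + 1 := by omega
  have h2 : n - ((n - (j+1)) + 1) = j := by omega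
  rw [Mfun, h1, botMax, h2, Mfun]

private lemma Mfun_ge (S : ℕ → ℝ) (n : ℕ) : ∀ j, j ≤ n → S j ≤ Mfun S n j := by
  intro j hj
  rcases Nat.lt_or_ge j n with h | h
  · rw [Mfun_rec S n j h]; exact le_max_left _ _
  · have h3 : j = n := by omega
    rw [h3, Mfun_top]

private lemma Mfun_mono (S : ℕ → ℝ) (n : ℕ) : ∀ j, j < n → Mfun S n (j+1) ≤ Mfun S n j := by
  intro j hj; rw [Mfun_rec S n j hj]; exact le_max_right _ _

private lemma Mfun_exists (S : ℕ → ℝ) (n : ℕ) : ∀ j, j ≤ n →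
    ∃ h₀, j ≤ h₀ ∧ h₀ ≤ n ∧ S h₀ = Mfun S n j := by
  have key : ∀ t j, j ≤ n → n - j = t → ∃ h₀, j ≤ h₀ ∧ h₀ ≤ n ∧ S h₀ = Mfun S n j := by
    intro t
    induction t with
    | zero =>
      intro j h1 h2
      have h3 : j = n := by omega
      exact ⟨j, le_refl _, by omega, by rw [h3]; exact (Mfun_top S n).symm⟩
    | succ t ih =>
      intro j h1 h2
      have hj : j < n := by omega
      rcases le_total (Mfun S n (j+1)) (S j) with h | h
      · exact ⟨j, le_refl _, by omega, by rw [Mfun_rec S n j hj, max_eq_left h]⟩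
      · obtain ⟨h₀, k1, k2, k3⟩ := ih (j+1) (by omega) (by omega)
        exact ⟨h₀, by omega, k2, by rw [Mfun_rec S n j hj, max_eq_right h]; exact k3⟩
  intro j hj; exact key (n - j) j hj rfl

private noncomputable def vhat (W S M β : ℕ → ℝ) (V : ℝ) (j : ℕ) : ℝ :=
  max (lamFun W j) (W (j+1) + β j * (M (j+1) - S (j+1))) - V

private noncomputable def Cf (n : ℕ) (W S M β : ℕ → ℝ) (V : ℝ) (j : ℕ) : ℝ :=
  if j = n then 0
  else (vhat W S M β V j - vhat W S M β V (j-1)) / (β j - β (j-1))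

private noncomputable def df (n : ℕ) (W S M β : ℕ → ℝ) (V : ℝ) (j : ℕ) : ℝ :=
  if j = n then vhat W S M β V (n-1)
  else vhat W S M β V (j-1) - Cf n W S M β V j * β (j-1)

/-- Hypothesis bundle for the chain development. -/
private structure ChainHyp (n : ℕ) (W S M β : ℕ → ℝ) : Prop where
  hn : 2 ≤ n
  hβ0 : β 0 = 0
  hmono : ∀ i j, i ≤ j → j ≤ n-1 → β i ≤ β j
  hstrict : ∀ j, 1 ≤ j → j ≤ n-1 → β (j-1) < β j
  hpos : ∀ j, 1 ≤ j → j ≤ n-1 → 0 < β j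
  hS : ∀ j, 1 ≤ j → j ≤ n-1 → β j * (S (j+1) - S j) = W (j+1) - W j
  hMrec : ∀ j, j < n → M j = max (S j) (M (j+1))
  hMn : M n = S n

namespace ChainHyp

variable {n : ℕ} {W S M β : ℕ → ℝ} (H : ChainHyp n W S M β)
include H

private lemma beta_nn : ∀ j, j ≤ n-1 → 0 ≤ β j := by
  intro j hj
  rcases Nat.eq_zero_or_pos j with h | h
  · subst h; exact le_of_eq H.hβ0.symm
  · exact le_of_lt (H.hpos j h hj)

private lemma Mge : ∀ j, j ≤ n → S j ≤ M j := by
  intro j hj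
  rcases Nat.lt_or_ge j n with h | h
  · rw [H.hMrec j h]; exact le_max_left _ _
  · have h3 : j = n := by omega
    rw [h3, H.hMn]

private lemma Mmono : ∀ j, j < n → M (j+1) ≤ M j := by
  intro j hj; rw [H.hMrec j hj]; exact le_max_right _ _

private lemma chi_eq : ∀ j, 1 ≤ j → j ≤ n-1 →
    W (j+1) + β j * (M (j+1) - S (j+1)) = W j + β j * (M (j+1) - S j) := by
  intro j h1 h2
  have h := H.hS j h1 h2
  nlinarith [h]

private lemma vhat_mono (V : ℝ) : ∀ j, 1 ≤ j → j ≤ n-1 →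
    vhat W S M β V (j-1) ≤ vhat W S M β V j := by
  intro j h1 h2
  obtain ⟨j', rfl⟩ : ∃ j', j = j'+1 := ⟨j-1, by omega⟩
  simp only [vhat, Nat.add_sub_cancel]
  have hΛ : lamFun W j' ≤ lamFun W (j'+1) := lamFun_mono W j'
  apply sub_le_sub_right
  apply max_le
  · exact le_trans hΛ (le_max_left _ _)
  · rcases le_total (S (j'+1)) (M (j'+2)) with hc | hc
    · have hM1 : M (j'+1) = M (j'+2) := by
        rw [H.hMrec (j'+1) (by omega)]; exact max_eq_right hc
      have hchi : W (j'+1+1) + β (j'+1) * (M (j'+1+1) - S (j'+1+1))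
          = W (j'+1) + β (j'+1) * (M (j'+2) - S (j'+1)) := H.chi_eq (j'+1) (by omega) h2
      refine le_trans ?_ (le_max_right _ _)
      rw [hchi, hM1]
      have hb : β j' ≤ β (j'+1) := H.hmono j' (j'+1) (by omega) h2
      nlinarith [hc]
    · have hM1 : M (j'+1) = S (j'+1) := by
        rw [H.hMrec (j'+1) (by omega)]; exact max_eq_left hc
      rw [hM1]
      refine le_trans ?_ (le_max_left _ _)
      have := lamFun_ge W (j'+1) (j'+1) (by omega) (by omega)
      simp only [sub_self, mul_zero, add_zero]
      exact this

private lemma C_nonneg (V : ℝ) : ∀ j, 1 ≤ j → j ≤ n → 0 ≤ Cf n W S M β V j := by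
  intro j h1 h2
  by_cases h : j = n
  · simp [Cf, h]
  · have h2' : j ≤ n - 1 := by omega
    simp only [Cf, if_neg h]
    apply div_nonneg
    · linarith [H.vhat_mono V j h1 h2']
    · linarith [H.hstrict j h1 h2']

private lemma psi_bot (V : ℝ) : ∀ j, 1 ≤ j → j ≤ n →
    df n W S M β V j + Cf n W S M β V j * β (j-1) = vhat W S M β V (j-1) := by
  intro j h1 h2
  by_cases h : j = n
  · simp [df, Cf, h]
  · simp only [df, Cf, if_neg h]; ring

private lemma psi_top (V : ℝ) : ∀ j, 1 ≤ j → j ≤ n-1 →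
    df n W S M β V j + Cf n W S M β V j * β j = vhat W S M β V j := by
  intro j h1 h2
  have hj : j ≠ n := by omega
  have hΔ : β j - β (j-1) ≠ 0 := by linarith [H.hstrict j h1 h2]
  simp only [df, Cf, if_neg hj]
  field_simp
  ring

private lemma key_ineq (V : ℝ) : ∀ j, 1 ≤ j → j ≤ n-1 →
    (W j - V) * (β j - β (j-1)) ≤
      vhat W S M β V (j-1) * β j - vhat W S M β V j * β (j-1) := by
  intro j h1 h2
  obtain ⟨j', rfl⟩ : ∃ j', j = j'+1 := ⟨j-1, by omega⟩
  simp only [Nat.add_sub_cancel]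
  have hβpos : 0 < β (j'+1) := H.hpos (j'+1) (by omega) h2
  have hβnn' : 0 ≤ β j' := H.beta_nn j' (by omega)
  have hblt : β j' < β (j'+1) := by
    have := H.hstrict (j'+1) (by omega) h2; simpa using this
  -- χ at j' : vhat j' ≥ χ(j') - V, with χ(j') = W (j'+1) + β j' * (M (j'+1) - S (j'+1))
  have hvl : W (j'+1) + β j' * (M (j'+1) - S (j'+1)) - V ≤ vhat W S M β V j' :=
    sub_le_sub_right (le_max_right _ _) V
  have hMS1 : 0 ≤ M (j'+1) - S (j'+1) := by
    linarith [H.Mge (j'+1) (by omega)]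
  have hMm : M (j'+2) ≤ M (j'+1) := H.Mmono (j'+1) (by omega)
  -- case analysis on vhat (j'+1)
  rcases max_cases (lamFun W (j'+1)) (W (j'+2) + β (j'+1) * (M (j'+2) - S (j'+2))) with
    ⟨hmx, hle⟩ | ⟨hmx, hlt⟩
  · -- vhat (j'+1) = Λ (j'+1) - V, with χ(j'+1) ≤ Λ(j'+1)
    have hveq : vhat W S M β V (j'+1) = lamFun W (j'+1) - V := by rw [vhat, hmx]
    rcases Nat.eq_zero_or_pos j' with hj0 | hj0
    · -- j = 1 : β (j-1) = 0
      subst hj0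
      have hβ00 : β 0 = 0 := H.hβ0
      rw [hβ00, hveq]
      have hΛW : W 1 ≤ lamFun W 0 := le_of_eq rfl
      have : W 1 - V ≤ vhat W S M β V 0 := by
        rw [vhat]
        have : W 1 ≤ max (lamFun W 0) (W (0+1) + β 0 * (M (0+1) - S (0+1))) :=
          le_trans hΛW (le_max_left _ _)
        linarith
      nlinarith [this]
    · -- j'+1 ≥ 2
      have hlam : lamFun W (j'+1) = max (lamFun W j') (W (j'+1)) := lamFun_succ W j' hj0
      rcases max_cases (lamFun W j') (W (j'+1)) with ⟨hm2, hle2⟩ | ⟨hm2, hlt2⟩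
      · -- Λ (j'+1) = Λ j' : vhat j' ≥ Λ j' - V = vhat (j'+1)
        have hvv : vhat W S M β V (j'+1) ≤ vhat W S M β V j' := by
          rw [hveq, hlam, hm2, vhat]
          have : lamFun W j' ≤ max (lamFun W j') (W (j'+1) + β j' * (M (j'+1) - S (j'+1))) :=
            le_max_left _ _
          linarith
        have hWv : W (j'+1) - V ≤ vhat W S M β V (j'+1) := by
          rw [hveq, hlam, hm2]; linarith
        nlinarith [hvv, hWv]
      · -- Λ (j'+1) = W (j'+1)
        have hveq2 : vhat W S M β V (j'+1) = W (j'+1) - V := by rw [hveq, hlam, hm2]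
        have hvj' : W (j'+1) - V ≤ vhat W S M β V j' := by
          nlinarith [hvl, hMS1, hβnn']
        rw [hveq2]
        nlinarith [hvj']
  · -- vhat (j'+1) = χ (j'+1) - V
    have hveq : vhat W S M β V (j'+1)
        = W (j'+1) + β (j'+1) * (M (j'+2) - S (j'+1)) - V := by
      rw [vhat, hmx, H.chi_eq (j'+1) (by omega) h2]
    rw [hveq]
    -- lower bound vhat j' by χ (j') and compute
    nlinarith [hvl, mul_nonneg (mul_nonneg hβnn' (le_of_lt hβpos)) (sub_nonneg.mpr hMm)]

private lemma d_ge (V : ℝ) : ∀ j, 1 ≤ j → j ≤ n →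
    W j - V ≤ df n W S M β V j := by
  intro j h1 h2
  by_cases h : j = n
  · simp only [df, if_pos h]
    obtain ⟨j', hsucc⟩ : ∃ j', j' + 1 = n := ⟨n-1, by omega⟩
    have hn1 : n - 1 = j' := by omega
    have hM : M (j'+1) = S (j'+1) := by rw [hsucc]; exact H.hMn
    have hχ : W (j'+1) + β j' * (M (j'+1) - S (j'+1)) = W (j'+1) := by rw [hM]; ring
    have hv : W (j'+1) + β j' * (M (j'+1) - S (j'+1)) - V ≤ vhat W S M β V j' :=
      sub_le_sub_right (le_max_right _ _) _
    rw [hχ] at hv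
    have hj : j = j' + 1 := by omega
    rw [hn1, hj]
    exact hv
  · have h2' : j ≤ n - 1 := by omega
    have hkey := H.key_ineq V j h1 h2'
    have hΔ : 0 < β j - β (j-1) := by linarith [H.hstrict j h1 h2']
    simp only [df, Cf, if_neg h]
    rw [div_mul_eq_mul_div, le_sub_iff_add_le]
    refine le_of_mul_le_mul_right ?_ hΔ
    have hX : (vhat W S M β V j - vhat W S M β V (j-1)) * β (j-1) / (β j - β (j-1))
        * (β j - β (j-1)) = (vhat W S M β V j - vhat W S M β V (j-1)) * β (j-1) :=
      div_mul_cancel₀ _ (ne_of_gt hΔ)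
    nlinarith [hkey, hX]

end ChainHyp

/-! ### Instance-level definitions and facts -/

private noncomputable def Wc (m : ℕ) (c : ℕ → ℝ) (F : ℕ → ℕ → ℝ) (r : ℕ → ℝ) (i : ℕ) : ℝ :=
  expRew m F r i - c i

private noncomputable def Sc (m : ℕ) (c : ℕ → ℝ) (F : ℕ → ℕ → ℝ) (r : ℕ → ℝ) (β : ℕ → ℝ)
    (j : ℕ) : ℝ :=
  ∑ l ∈ Finset.Icc 1 (j-1), (Wc m c F r (l+1) - Wc m c F r l) / β l

private noncomputable def Mc (m n : ℕ) (c : ℕ → ℝ) (F : ℕ → ℕ → ℝ) (r : ℕ → ℝ) (β : ℕ → ℝ)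
    (j : ℕ) : ℝ :=
  Mfun (Sc m c F r β) n j

/-- Value of the free-fall contract that falls to the bottom of interval `j`. -/
private noncomputable def GGc (m n : ℕ) (c : ℕ → ℝ) (F : ℕ → ℕ → ℝ) (r : ℕ → ℝ) (p : ℕ → ℝ)
    (β : ℕ → ℝ) (j : ℕ) : ℝ :=
  expRew m F r j - β (j-1) * (expPay m F p j + Sc m c F r β j - Mc m n c F r β j)

section Inst

variable {n m : ℕ} {c : ℕ → ℝ} {F : ℕ → ℕ → ℝ} {r : ℕ → ℝ} {p : ℕ → ℝ} {β : ℕ → ℝ}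

private lemma beta_mono (hβ : Breakpoints n m c F p β) :
    ∀ i j, i ≤ j → j ≤ n-1 → β i ≤ β j := by
  intro i j hij hj
  induction j, hij using Nat.le_induction with
  | base => exact le_refl _
  | succ j hij ih =>
    exact le_trans (ih (by omega)) (le_of_lt (hβ.2.1 j (by omega)))

private lemma beta_strict (hβ : Breakpoints n m c F p β) :
    ∀ j, 1 ≤ j → j ≤ n-1 → β (j-1) < β j := by
  intro j h1 h2
  obtain ⟨j', rfl⟩ : ∃ j', j = j'+1 := ⟨j-1, by omega⟩
  simpa using hβ.2.1 j' (by omega)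

private lemma beta_pos (hβ : Breakpoints n m c F p β) :
    ∀ j, 1 ≤ j → j ≤ n-1 → 0 < β j := by
  intro j h1 h2
  exact lt_of_lt_of_le hβ.2.2.1 (beta_mono hβ 1 j h1 h2)

private lemma beta_nonneg (hβ : Breakpoints n m c F p β) :
    ∀ j, j ≤ n-1 → 0 ≤ β j := by
  intro j hj
  rcases Nat.eq_zero_or_pos j with h | h
  · subst h; exact le_of_eq hβ.1.symm
  · exact le_of_lt (beta_pos hβ j h hj)

private lemma pay_nonneg (hInst : PInstance n m c F r p) :
    ∀ i ∈ Finset.Icc 1 n, 0 ≤ expPay m F p i := by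
  intro i hi
  apply Finset.sum_nonneg
  intro j hj
  exact mul_nonneg ((hInst.2.2.2.1 i hi).1 j hj) (hInst.2.2.2.2 j hj)

private lemma br_mem (hβ : Breakpoints n m c F p β) (x : ℝ) (hx : 0 ≤ x) (i : ℕ)
    (h1 : 1 ≤ i) (h2 : i ≤ n) (hlo : β (i-1) ≤ x) (hhi : i < n → x ≤ β i) :
    i ∈ BRp n m c F p x :=
  (hβ.2.2.2 x hx i h1 h2).2 ⟨hlo, hhi⟩

private lemma br_bounds (hβ : Breakpoints n m c F p β) (x : ℝ) (hx : 0 ≤ x) (i : ℕ)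
    (h1 : 1 ≤ i) (h2 : i ≤ n) (hmem : i ∈ BRp n m c F p x) :
    β (i-1) ≤ x ∧ (i < n → x ≤ β i) :=
  (hβ.2.2.2 x hx i h1 h2).1 hmem

private lemma br_le {x : ℝ} {i : ℕ} (h : i ∈ BRp n m c F p x) :
    ∀ j ∈ Finset.Icc 1 n, x * expPay m F p j - c j ≤ x * expPay m F p i - c i :=
  h.2

private lemma br_icc {x : ℝ} {i : ℕ} (h : i ∈ BRp n m c F p x) : i ∈ Finset.Icc 1 n :=
  h.1

private lemma br_eq {x : ℝ} {i j : ℕ} (hi : i ∈ BRp n m c F p x) (hj : j ∈ BRp n m c F p x) :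
    x * expPay m F p i - c i = x * expPay m F p j - c j :=
  le_antisymm (hj.2 i hi.1) (hi.2 j hj.1)

private lemma indiff_s6 (hβ : Breakpoints n m c F p β) (l : ℕ) (h1 : 1 ≤ l) (h2 : l ≤ n-1) :
    β l * expPay m F p l - c l = β l * expPay m F p (l+1) - c (l+1) := by
  have hx : (0:ℝ) ≤ β l := beta_nonneg hβ l h2
  have hl : l ∈ BRp n m c F p (β l) := by
    apply br_mem hβ (β l) hx l h1 (by omega)
    · exact beta_mono hβ (l-1) l (by omega) h2
    · intro _; exact le_refl _
  have hl1 : (l+1) ∈ BRp n m c F p (β l) := by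
    apply br_mem hβ (β l) hx (l+1) (by omega) (by omega)
    · simpa using le_refl (β l)
    · intro h; exact le_of_lt (by simpa using beta_strict hβ (l+1) (by omega) (by omega))
  exact br_eq hl hl1

private lemma br_adj (hβ : Breakpoints n m c F p β) {x : ℝ} (hx : 0 ≤ x) {i i' : ℕ}
    (hi : i ∈ BRp n m c F p x) (hi' : i' ∈ BRp n m c F p x) (hlt : i < i') :
    i' = i + 1 ∧ x = β i := by
  have hiI := br_icc hi
  have hi'I := br_icc hi'
  simp only [Finset.mem_Icc] at hiI hi'I
  have hb := br_bounds hβ x hx i hiI.1 hiI.2 hi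
  have hb' := br_bounds hβ x hx i' hi'I.1 hi'I.2 hi'
  have hup : x ≤ β i := hb.2 (by omega)
  have hlo : β (i'-1) ≤ x := hb'.1
  have hadj : i' = i + 1 := by
    by_contra hne
    have h2 : i + 1 ≤ i' - 1 := by omega
    have : β i < β (i'-1) := by
      calc β i < β (i+1) := by simpa using beta_strict hβ (i+1) (by omega) (by omega)
        _ ≤ β (i'-1) := beta_mono hβ (i+1) (i'-1) h2 (by omega)
    linarith
  refine ⟨hadj, ?_⟩
  have : β i ≤ x := by
    have := hb'.1
    rw [hadj] at this
    simpa using this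
  linarith

private lemma Sc_step (hβ : Breakpoints n m c F p β) (j : ℕ) (h1 : 1 ≤ j) (h2 : j ≤ n-1) :
    β j * (Sc m c F r β (j+1) - Sc m c F r β j) = Wc m c F r (j+1) - Wc m c F r j := by
  have hne : β j ≠ 0 := ne_of_gt (beta_pos hβ j h1 h2)
  have hstep : Sc m c F r β (j+1) = Sc m c F r β j + (Wc m c F r (j+1) - Wc m c F r j) / β j := by
    obtain ⟨j', rfl⟩ : ∃ j', j = j'+1 := ⟨j-1, by omega⟩
    simp only [Sc, Nat.add_sub_cancel]
    rw [Finset.sum_Icc_succ_top (by omega : 1 ≤ j'+1)]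
  rw [hstep]
  field_simp
  ring

private lemma chainHyp_inst (hInst : PInstance n m c F r p) (hβ : Breakpoints n m c F p β) :
    ChainHyp n (Wc m c F r) (Sc m c F r β) (Mc m n c F r β) β := by
  refine ⟨hInst.1, hβ.1, beta_mono hβ, beta_strict hβ, beta_pos hβ, Sc_step hβ, ?_, ?_⟩
  · intro j hj; exact Mfun_rec _ n j hj
  · exact Mfun_top _ n

end Inst

/-! ### The upper bound: any valid contract's utility is at most `B`,
for any `B` dominating all bottom-of-interval free-fall values `GGc`. -/

private lemma util_le (n m : ℕ) (c : ℕ → ℝ) (F : ℕ → ℕ → ℝ) (r : ℕ → ℝ) (p : ℕ → ℝ)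
    (β : ℕ → ℝ) (hInst : PInstance n m c F r p) (hβ : Breakpoints n m c F p β)
    (π : DSC) (hπ : π.Valid n m c F p) (B : ℝ)
    (hB : ∀ j, 1 ≤ j → j ≤ n → GGc m n c F r p β j ≤ B) :
    π.Util m F r p ≤ B := by
  obtain ⟨hK1, hseg, hBRk, hBRk2⟩ := hπ
  have H : ChainHyp n (Wc m c F r) (Sc m c F r β) (Mc m n c F r β) β := chainHyp_inst hInst hβ
  set W := Wc m c F r with hWdef
  set S := Sc m c F r β with hSdef
  set M := Mc m n c F r β with hMdef
  set P := expPay m F p with hPdef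
  set R := expRew m F r with hRdef
  set dd := df n W S M β B with hdddef
  set CC := Cf n W S M β B with hCCdef
  have hn2 : 2 ≤ n := hInst.1
  have hWc : ∀ i, W i = R i - c i := fun i => rfl
  have hGG : ∀ j, GGc m n c F r p β j = R j - β (j-1) * (P j + S j - M j) := fun j => rfl
  -- durations/avg facts
  have hτpos : ∀ k, 1 ≤ k → k ≤ π.K → 0 < π.τ k := by
    intro k h1 h2; exact (hseg k (Finset.mem_Icc.mpr ⟨h1, h2⟩)).2.1
  have hαnn : ∀ k, 1 ≤ k → k ≤ π.K → 0 ≤ π.α k := by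
    intro k h1 h2; exact (hseg k (Finset.mem_Icc.mpr ⟨h1, h2⟩)).1
  have haIcc : ∀ k, 1 ≤ k → k ≤ π.K → 1 ≤ π.a k ∧ π.a k ≤ n := by
    intro k h1 h2
    exact Finset.mem_Icc.mp (hseg k (Finset.mem_Icc.mpr ⟨h1, h2⟩)).2.2
  have hT : ∀ k, 1 ≤ k → k ≤ π.K → 0 < π.Tsum k := by
    intro k h1 h2
    apply Finset.sum_pos
    · intro i hi
      have := Finset.mem_Icc.mp hi
      exact hτpos i this.1 (le_trans this.2 h2)
    · exact ⟨1, Finset.mem_Icc.mpr ⟨le_refl _, h1⟩⟩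
  have hA : ∀ k, k ≤ π.K → 0 ≤ ∑ t ∈ Finset.Icc 1 k, π.α t * π.τ t := by
    intro k h2
    apply Finset.sum_nonneg
    intro i hi
    have := Finset.mem_Icc.mp hi
    exact mul_nonneg (hαnn i this.1 (le_trans this.2 h2)) (le_of_lt (hτpos i this.1 (le_trans this.2 h2)))
  have havgA : ∀ k, 1 ≤ k → k ≤ π.K →
      π.Tsum k * π.avg k = ∑ t ∈ Finset.Icc 1 k, π.α t * π.τ t := by
    intro k h1 h2
    rw [DSC.avg, mul_div_cancel₀ _ (ne_of_gt (hT k h1 h2))]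
  have havg0 : ∀ k, 1 ≤ k → k ≤ π.K → 0 ≤ π.avg k := by
    intro k h1 h2
    exact div_nonneg (hA k h2) (le_of_lt (hT k h1 h2))
  -- the key static bound
  have key1 : ∀ l, 1 ≤ l → l ≤ n → ∀ z w : ℝ, β (l-1) ≤ z → z * P l - c l ≤ w →
      W l - w ≤ B := by
    intro l h1 h2 z w hz hw
    have hp : 0 ≤ P l := pay_nonneg hInst l (Finset.mem_Icc.mpr ⟨h1, h2⟩)
    have hβn : 0 ≤ β (l-1) := beta_nonneg hβ (l-1) (by omega)
    have hMS : S l ≤ M l := H.Mge l h2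
    have hGGl := hB l h1 h2
    rw [hGG l] at hGGl
    rw [hWc l]
    nlinarith [mul_nonneg (sub_nonneg.mpr hz) hp, mul_nonneg hβn (sub_nonneg.mpr hMS)]
  -- bounding the running maximum part
  have hlam : ∀ (j : ℕ) (z w : ℝ), max j 1 ≤ n → (∀ l, 1 ≤ l → l ≤ max j 1 → β (l-1) ≤ z) →
      (∀ l, 1 ≤ l → l ≤ max j 1 → z * P l - c l ≤ w) → lamFun W j ≤ w + B := by
    intro j z w hjn hz hw
    apply lamFun_le
    intro l h1 h2
    have := key1 l h1 (le_trans h2 hjn) z w (hz l h1 h2) (hw l h1 h2)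
    linarith
  -- the final action and average
  set f := π.a π.K with hfdef
  set y := π.avg π.K with hydef
  have hfb := haIcc π.K hK1 (le_refl _)
  obtain ⟨hf1, hfn⟩ : 1 ≤ f ∧ f ≤ n := ⟨(hfb).1, (hfb).2⟩
  have hy0 : 0 ≤ y := havg0 π.K hK1 (le_refl _)
  have hyBR : f ∈ BRp n m c F p y := hBRk π.K (Finset.mem_Icc.mpr ⟨hK1, le_refl _⟩)
  have hyb := br_bounds hβ y hy0 f hf1 hfn hyBR
  -- endpoint bound 1 : vhat (f-1) ≤ β (f-1) * P f - c f
  have hsuccf : f - 1 + 1 = f := by omega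
  have hE1 : vhat W S M β B (f-1) ≤ β (f-1) * P f - c f := by
    have hx : (0:ℝ) ≤ β (f-1) := beta_nonneg hβ (f-1) (by omega)
    have hBRf1 : f ∈ BRp n m c F p (β (f-1)) := by
      apply br_mem hβ _ hx f hf1 hfn (le_refl _)
      intro hlt
      exact beta_mono hβ (f-1) f (by omega) (by omega)
    rw [vhat, sub_le_iff_le_add]
    apply max_le
    · have := hlam (f-1) (β (f-1)) (β (f-1) * P f - c f) (by omega)
        (fun l h1 h2 => beta_mono hβ (l-1) (f-1) (by omega) (by omega))
        (fun l h1 h2 => br_le hBRf1 l (Finset.mem_Icc.mpr ⟨h1, by omega⟩))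
      linarith
    · have := hB f hf1 hfn
      rw [hGG f] at this
      rw [hsuccf, hWc f]
      linarith
  -- endpoint bound 2 : for f < n, vhat f ≤ β f * P f - c f
  have hE2 : f < n → vhat W S M β B f ≤ β f * P f - c f := by
    intro hflt
    have hx : (0:ℝ) ≤ β f := beta_nonneg hβ f (by omega)
    have hBRf2 : f ∈ BRp n m c F p (β f) := by
      apply br_mem hβ _ hx f hf1 hfn (beta_mono hβ (f-1) f (by omega) (by omega))
      intro _; exact le_refl _
    rw [vhat, sub_le_iff_le_add]
    apply max_le
    · have := hlam f (β f) (β f * P f - c f) (by omega)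
        (fun l h1 h2 => beta_mono hβ (l-1) f (by omega) (by omega))
        (fun l h1 h2 => br_le hBRf2 l (Finset.mem_Icc.mpr ⟨h1, by omega⟩))
      linarith
    · have hind := indiff_s6 hβ f hf1 (by omega)
      have := hB (f+1) (by omega) (by omega)
      rw [hGG (f+1)] at this
      rw [hWc (f+1)]
      simp only [Nat.add_sub_cancel] at this
      linarith
  -- P3 : ψ_f(y) ≤ u_f(y)
  have hP3 : dd f + CC f * y ≤ y * P f - c f := by
    by_cases hfn' : f = n
    · have hCn : CC f = 0 := by rw [hCCdef, Cf, if_pos hfn']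
      have hdn : dd f = vhat W S M β B (n-1) := by rw [hdddef, df, if_pos hfn']
      rw [hCn, hdn, zero_mul, add_zero]
      have hsucc : n - 1 + 1 = n := by omega
      rw [vhat, sub_le_iff_le_add]
      apply max_le
      · have := hlam (n-1) y (y * P f - c f) (by omega)
          (fun l h1 h2 => le_trans (beta_mono hβ (l-1) (f-1) (by omega) (by omega)) hyb.1)
          (fun l h1 h2 => br_le hyBR l (Finset.mem_Icc.mpr ⟨h1, by omega⟩))
        linarith
      · rw [hsucc]
        have hMn : M n = S n := H.hMn
        rw [hMn]
        simp only [sub_self, mul_zero, add_zero]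
        have hyn : β (n-1) ≤ y := by rw [show n-1 = f-1 by omega]; exact hyb.1
        have hwn : y * P n - c n ≤ y * P f - c f := le_of_eq (by rw [hfn'])
        have := key1 n (by omega) (le_refl _) y (y * P f - c f) hyn hwn
        linarith
    · have hflt : f < n := by omega
      have h1' := hE1
      have h2' := hE2 hflt
      have hbot : dd f + CC f * β (f-1) = vhat W S M β B (f-1) := H.psi_bot B f hf1 hfn
      have htop : dd f + CC f * β f = vhat W S M β B f := H.psi_top B f hf1 (by omega)
      have hylo : β (f-1) ≤ y := hyb.1
      have hyhi : y ≤ β f := hyb.2 hflt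
      rcases le_total (CC f) (P f) with hc | hc
      · have a1 : 0 ≤ (y - β (f-1)) * (P f - CC f) :=
          mul_nonneg (sub_nonneg.mpr hylo) (sub_nonneg.mpr hc)
        nlinarith [a1, hbot, h1']
      · have a1 : 0 ≤ (β f - y) * (CC f - P f) :=
          mul_nonneg (sub_nonneg.mpr hyhi) (sub_nonneg.mpr hc)
        nlinarith [a1, htop, h2']
  -- potential
  set Φ : ℕ → ℝ := fun k => (∑ t ∈ Finset.Icc 1 k, π.α t * π.τ t) * P (π.a k)
      - π.Tsum k * c (π.a k)
      - (π.Tsum k * dd (π.a k) + CC (π.a k) * (∑ t ∈ Finset.Icc 1 k, π.α t * π.τ t)) with hΦdef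
  have hΦ : ∀ k, 1 ≤ k → k ≤ π.K →
      Φ k = π.Tsum k * ((π.avg k * P (π.a k) - c (π.a k))
        - (dd (π.a k) + CC (π.a k) * π.avg k)) := by
    intro k h1 h2
    rw [hΦdef]
    simp only
    rw [← havgA k h1 h2]
    ring
  -- junction
  have hjunc : ∀ k, 1 ≤ k → k + 1 ≤ π.K →
      Φ k = π.Tsum k * ((π.avg k * P (π.a (k+1)) - c (π.a (k+1)))
        - (dd (π.a (k+1)) + CC (π.a (k+1)) * π.avg k)) := by
    intro k h1 h2
    have hjo : π.a k ∈ BRp n m c F p (π.avg k) :=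
      hBRk k (Finset.mem_Icc.mpr ⟨h1, by omega⟩)
    have hjn : π.a (k+1) ∈ BRp n m c F p (π.avg k) := by
      have := hBRk2 (k+1) (by omega) h2
      simpa using this
    have hx0 : 0 ≤ π.avg k := havg0 k h1 (by omega)
    have hPC : π.avg k * P (π.a k) - c (π.a k)
        = π.avg k * P (π.a (k+1)) - c (π.a (k+1)) := br_eq hjo hjn
    have hψeq : dd (π.a k) + CC (π.a k) * π.avg k
        = dd (π.a (k+1)) + CC (π.a (k+1)) * π.avg k := by
      rcases lt_trichotomy (π.a k) (π.a (k+1)) with hlt | heq | hgt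
      · obtain ⟨hadj, hxβ⟩ := br_adj hβ hx0 hjo hjn hlt
        have hbo := haIcc k h1 (by omega)
        have hbn := haIcc (k+1) (by omega) h2
        have htop := H.psi_top B (π.a k) hbo.1 (by omega)
        have hbot := H.psi_bot B (π.a (k+1)) hbn.1 hbn.2
        rw [hxβ]
        rw [htop, hadj]
        rw [hadj, show π.a k + 1 - 1 = π.a k by omega] at hbot
        exact hbot.symm
      · rw [heq]
      · obtain ⟨hadj, hxβ⟩ := br_adj hβ hx0 hjn hjo hgt
        have hbo := haIcc k h1 (by omega)
        have hbn := haIcc (k+1) (by omega) h2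
        have htop := H.psi_top B (π.a (k+1)) hbn.1 (by omega)
        have hbot := H.psi_bot B (π.a k) hbo.1 hbo.2
        rw [hxβ]
        rw [hadj] at hbot ⊢
        rw [show π.a (k+1) + 1 - 1 = π.a (k+1) by omega] at hbot
        rw [hbot, htop]
    rw [hΦ k h1 (by omega), hPC, hψeq]
  -- main telescoping bound
  have hmain : ∀ k, 1 ≤ k → k ≤ π.K →
      (∑ t ∈ Finset.Icc 1 k, π.τ t * (R (π.a t) - π.α t * P (π.a t)))
        ≤ B * π.Tsum k - Φ k := by
    intro k hk1
    induction k, hk1 using Nat.le_induction with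
    | base =>
      intro hK
      have hτ1 : 0 < π.τ 1 := hτpos 1 (le_refl _) hK
      have hα1 : 0 ≤ π.α 1 := hαnn 1 (le_refl _) hK
      have ha1 := haIcc 1 (le_refl _) hK
      have hd1 : W (π.a 1) - B ≤ dd (π.a 1) := H.d_ge B (π.a 1) ha1.1 ha1.2
      have hC1 : 0 ≤ CC (π.a 1) := H.C_nonneg B (π.a 1) ha1.1 ha1.2
      have hT1 : π.Tsum 1 = π.τ 1 := by
        rw [DSC.Tsum]; simp
      have havg1 : π.avg 1 = π.α 1 := by
        rw [DSC.avg, DSC.Tsum]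
        simp only [Finset.Icc_self, Finset.sum_singleton]
        field_simp
      rw [hΦ 1 (le_refl _) hK, hT1, havg1]
      simp only [Finset.Icc_self, Finset.sum_singleton]
      rw [hWc (π.a 1)] at hd1
      have a1 : 0 ≤ π.τ 1 * (CC (π.a 1) * π.α 1) :=
        mul_nonneg hτ1.le (mul_nonneg hC1 hα1)
      have a2 : 0 ≤ π.τ 1 * (dd (π.a 1) + B - (R (π.a 1) - c (π.a 1))) :=
        mul_nonneg hτ1.le (by linarith [hd1])
      nlinarith [a1, a2]
    | succ k hk ih =>
      intro hK
      have hIH := ih (by omega)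
      have hτ' : 0 < π.τ (k+1) := hτpos (k+1) (by omega) hK
      have hα' : 0 ≤ π.α (k+1) := hαnn (k+1) (by omega) hK
      have ha' := haIcc (k+1) (by omega) hK
      have hd' : W (π.a (k+1)) - B ≤ dd (π.a (k+1)) := H.d_ge B (π.a (k+1)) ha'.1 ha'.2
      have hC' : 0 ≤ CC (π.a (k+1)) := H.C_nonneg B (π.a (k+1)) ha'.1 ha'.2
      have hsum1 : (∑ t ∈ Finset.Icc 1 (k+1), π.τ t * (R (π.a t) - π.α t * P (π.a t)))
          = (∑ t ∈ Finset.Icc 1 k, π.τ t * (R (π.a t) - π.α t * P (π.a t)))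
            + π.τ (k+1) * (R (π.a (k+1)) - π.α (k+1) * P (π.a (k+1))) :=
        Finset.sum_Icc_succ_top (by omega) _
    
      have hsum2 : (∑ t ∈ Finset.Icc 1 (k+1), π.α t * π.τ t)
          = (∑ t ∈ Finset.Icc 1 k, π.α t * π.τ t) + π.α (k+1) * π.τ (k+1) :=
        Finset.sum_Icc_succ_top (by omega) _
      have hsum3 : π.Tsum (k+1) = π.Tsum k + π.τ (k+1) :=
        Finset.sum_Icc_succ_top (by omega) _
      have hjk := hjunc k (by omega) hK
      have hTx : π.Tsum k * π.avg k = ∑ t ∈ Finset.Icc 1 k, π.α t * π.τ t :=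
        havgA k (by omega) (by omega)
      have hΦ1 : Φ (k+1) = (∑ t ∈ Finset.Icc 1 k, π.α t * π.τ t) * P (π.a (k+1))
          + π.α (k+1) * π.τ (k+1) * P (π.a (k+1))
          - (π.Tsum k + π.τ (k+1)) * c (π.a (k+1))
          - ((π.Tsum k + π.τ (k+1)) * dd (π.a (k+1))
            + CC (π.a (k+1)) * (∑ t ∈ Finset.Icc 1 k, π.α t * π.τ t)
            + CC (π.a (k+1)) * (π.α (k+1) * π.τ (k+1))) := by
        rw [hΦdef]
        simp only
        rw [hsum2, hsum3]
        ring
      have hΦ2 : Φ k = π.Tsum k * π.avg k * P (π.a (k+1)) - π.Tsum k * c (π.a (k+1))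
          - (π.Tsum k * dd (π.a (k+1)) + CC (π.a (k+1)) * (π.Tsum k * π.avg k)) := by
        rw [hjk]; ring
      rw [hTx] at hΦ2
      rw [hsum1, hsum3]
      rw [hWc (π.a (k+1))] at hd'
      have a1 : 0 ≤ CC (π.a (k+1)) * (π.α (k+1) * π.τ (k+1)) :=
        mul_nonneg hC' (mul_nonneg hα' hτ'.le)
      have a2 : 0 ≤ π.τ (k+1) * (dd (π.a (k+1)) + B - (R (π.a (k+1)) - c (π.a (k+1)))) :=
        mul_nonneg hτ'.le (by linarith [hd'])
      linarith [hIH, hΦ1.le, hΦ1.ge, hΦ2.le, hΦ2.ge, a1, a2]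
  -- conclude
  have hfinal := hmain π.K hK1 (le_refl _)
  have hΦK : 0 ≤ Φ π.K := by
    rw [hΦ π.K hK1 (le_refl _)]
    apply mul_nonneg (le_of_lt (hT π.K hK1 (le_refl _)))
    have := hP3
    linarith
  rw [DSC.Util, div_le_iff₀ (hT π.K hK1 (le_refl _))]
  calc (∑ k ∈ Finset.Icc 1 π.K, π.τ k * (R (π.a k) - π.α k * P (π.a k)))
      ≤ B * π.Tsum π.K - Φ π.K := hfinal
    _ ≤ B * π.Tsum π.K := by linarith


/-! ### The witness: a valid free-fall contract achieving `GGc j₀`. -/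

private lemma witness_exists (n m : ℕ) (c : ℕ → ℝ) (F : ℕ → ℕ → ℝ) (r : ℕ → ℝ) (p : ℕ → ℝ)
    (β : ℕ → ℝ) (hInst : PInstance n m c F r p) (hβ : Breakpoints n m c F p β)
    (j₀ : ℕ) (hj1 : 1 ≤ j₀) (hj2 : j₀ ≤ n) :
    ∃ π' : DSC, π'.Valid n m c F p ∧ π'.FreeFall ∧
      π'.Util m F r p = GGc m n c F r p β j₀ := by
  set P := expPay m F p with hPdef
  set R := expRew m F r with hRdef
  set S := Sc m c F r β with hSdef
  have hn2 : 2 ≤ n := hInst.1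
  rcases Nat.lt_or_ge j₀ 2 with hj02 | hj02
  · -- j₀ = 1 : the zero contract, forever action 1
    have hj0 : j₀ = 1 := by omega
    refine ⟨⟨1, fun _ => 0, fun _ => 1, fun _ => 1⟩, ⟨le_refl _, ?_, ?_, ?_⟩, ?_, ?_⟩
    · intro k hk
      refine ⟨le_refl _, one_pos, ?_⟩
      show (1:ℕ) ∈ Finset.Icc 1 n
      exact Finset.mem_Icc.mpr ⟨le_refl _, by omega⟩
    · intro k hk
      have hmem := Finset.mem_Icc.mp hk
      have hk2 : k ≤ 1 := hmem.2
      have hk1 : k = 1 := by omega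
      subst hk1
      have havg : DSC.avg ⟨1, fun _ => 0, fun _ => 1, fun _ => 1⟩ 1 = 0 := by
        simp [DSC.avg, DSC.Tsum]
      show (1:ℕ) ∈ BRp n m c F p (DSC.avg ⟨1, fun _ => 0, fun _ => 1, fun _ => 1⟩ 1)
      rw [havg]
      apply br_mem hβ 0 (le_refl _) 1 (le_refl _) (by omega)
      · rw [show (1:ℕ) - 1 = 0 by rfl, hβ.1]
      · intro _; exact le_of_lt hβ.2.2.1
    · intro k hk2 hk1
      have : k ≤ 1 := hk1
      omega
    · intro k _ _
      rfl
    · show (∑ k ∈ Finset.Icc 1 1, (1:ℝ) * (expRew m F r 1 - 0 * expPay m F p 1)) /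
        (∑ k ∈ Finset.Icc 1 1, (1:ℝ)) = GGc m n c F r p β j₀
      rw [hj0]
      simp only [Finset.Icc_self, Finset.sum_singleton, GGc]
      rw [show (1:ℕ) - 1 = 0 by rfl, hβ.1]
      ring
  · -- j₀ ≥ 2 : a genuine free-fall through intervals h₀, h₀-1, …, j₀
    obtain ⟨h₀, hh1, hh2, hh3⟩ := Mfun_exists (Sc m c F r β) n j₀ hj2
    set z := β (j₀ - 1) with hzdef
    have hzpos : 0 < z := beta_pos hβ (j₀-1) (by omega) (by omega)
    set N := h₀ - j₀ with hNdef
    have hNj : h₀ = j₀ + N := by omega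
    set x₀ : ℝ := if h₀ < n then β h₀ else β (n-1) + 1 with hx₀def
    set lam : ℕ → ℝ := fun t => if t = 0 then x₀ else if t ≤ N then β (h₀ - t) else z
      with hlamdef
    have hx₀gt : β (h₀ - 1) < x₀ := by
      rw [hx₀def]
      by_cases h : h₀ < n
      · rw [if_pos h]; exact beta_strict hβ h₀ (by omega) (by omega)
      · rw [if_neg h]
        have : h₀ = n := by omega
        rw [this]
        linarith
    have hx₀pos : 0 < x₀ := by
      rw [hx₀def]
      by_cases h : h₀ < n
      · rw [if_pos h]; exact beta_pos hβ h₀ (by omega) (by omega)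
      · rw [if_neg h]
        linarith [beta_nonneg hβ (n-1) (le_refl _)]
    have hx₀hi : h₀ < n → x₀ ≤ β h₀ := by
      intro h; rw [hx₀def, if_pos h]
    have hlam0 : lam 0 = x₀ := rfl
    have hlamlast : lam (N+1) = z := by
      simp only [hlamdef]
      rw [if_neg (by omega), if_neg (by omega)]
    have hlammid : ∀ t, 1 ≤ t → t ≤ N → lam t = β (h₀ - t) := by
      intro t h1 h2
      simp only [hlamdef]
      rw [if_neg (by omega), if_pos h2]
    have hlampos : ∀ t, t ≤ N+1 → 0 < lam t := by
      intro t ht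
      rcases Nat.eq_zero_or_pos t with h | h
      · rw [h, hlam0]; exact hx₀pos
      · rcases Nat.lt_or_ge t (N+1) with h' | h'
        · rw [hlammid t h (by omega)]
          exact beta_pos hβ (h₀ - t) (by omega) (by omega)
        · have : t = N+1 := by omega
          rw [this, hlamlast]; exact hzpos
    have hlamdec : ∀ t, 1 ≤ t → t ≤ N+1 → lam t < lam (t-1) := by
      intro t h1 h2
      rcases Nat.lt_or_ge t 2 with ht1 | ht1
      · -- t = 1
        have : t = 1 := by omega
        subst this
        simp only [Nat.sub_self, hlam0]
        rcases Nat.eq_zero_or_pos N with hN0 | hN0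
        · have hl1 : lam 1 = z := by rw [hN0] at hlamlast; simpa using hlamlast
          rw [hl1, hzdef, show j₀ - 1 = h₀ - 1 by omega]
          exact hx₀gt
        · rw [hlammid 1 (le_refl _) hN0]
          exact hx₀gt
      · -- t ≥ 2
        rcases Nat.lt_or_ge t (N+1) with h' | h'
        · -- 2 ≤ t ≤ N
          rw [hlammid t (by omega) (by omega), hlammid (t-1) (by omega) (by omega)]
          have e : h₀ - (t-1) = (h₀ - t) + 1 := by omega
          rw [e]
          have := beta_strict hβ (h₀ - t + 1) (by omega) (by omega)
          simpa using this
        · -- t = N+1 ≥ 2, so N ≥ 1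
          have : t = N+1 := by omega
          subst this
          rw [hlamlast]
          have e : N + 1 - 1 = N := by omega
          rw [e, hlammid N (by omega) (le_refl _)]
          rw [hzdef]
          have e2 : h₀ - N = j₀ := by omega
          rw [e2]
          exact beta_strict hβ j₀ (by omega) (by omega)
    -- the free-fall contract
    set π' : DSC := ⟨N+2, fun k => if k = 1 then x₀ else 0,
      fun k => if k = 1 then 1 else x₀ / lam (k-1) - x₀ / lam (k-2),
      fun k => if k = 1 then h₀ else h₀ + 2 - k⟩ with hπ'def
    have hα1 : π'.α 1 = x₀ := rfl
    have hαk : ∀ k, 2 ≤ k → π'.α k = 0 := by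
      intro k hk
      show (if k = 1 then x₀ else 0) = 0
      rw [if_neg (by omega)]
    have hτ1 : π'.τ 1 = 1 := rfl
    have hτk : ∀ k, 2 ≤ k → π'.τ k = x₀ / lam (k-1) - x₀ / lam (k-2) := by
      intro k hk
      show (if k = 1 then (1:ℝ) else x₀ / lam (k-1) - x₀ / lam (k-2)) = _
      rw [if_neg (by omega)]
    have ha1 : π'.a 1 = h₀ := rfl
    have hak : ∀ k, 2 ≤ k → π'.a k = h₀ + 2 - k := by
      intro k hk
      show (if k = 1 then h₀ else h₀ + 2 - k) = _
      rw [if_neg (by omega)]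
    have hτpos : ∀ k, 1 ≤ k → k ≤ N+2 → 0 < π'.τ k := by
      intro k h1 h3
      rcases Nat.lt_or_ge k 2 with h | h
      · rw [show k = 1 by omega, hτ1]; exact one_pos
      · rw [hτk k h]
        have hd := hlamdec (k-1) (by omega) (by omega)
        rw [show k-1-1 = k-2 by omega] at hd
        have p1 : 0 < lam (k-1) := hlampos (k-1) (by omega)
        have := div_lt_div_of_pos_left hx₀pos p1 hd
        linarith
    have hTsum : ∀ k, 1 ≤ k → k ≤ N+2 → π'.Tsum k = x₀ / lam (k-1) := by
      intro k h1
      induction k, h1 using Nat.le_induction with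
      | base =>
        intro _
        show (∑ j ∈ Finset.Icc 1 1, π'.τ j) = x₀ / lam (1-1)
        rw [Finset.Icc_self, Finset.sum_singleton]
        rw [hτ1, show (1:ℕ)-1 = 0 from rfl, hlam0, div_self (ne_of_gt hx₀pos)]
      | succ k hk ih =>
        intro h3
        have hstep : π'.Tsum (k+1) = π'.Tsum k + π'.τ (k+1) :=
          Finset.sum_Icc_succ_top (by omega) _
        rw [hstep, ih (by omega), hτk (k+1) (by omega)]
        rw [show k+1-1 = k by omega, show k+1-2 = k-1 by omega]
        ring
    have hAsum : ∀ k, 1 ≤ k → k ≤ N+2 → (∑ t ∈ Finset.Icc 1 k, π'.α t * π'.τ t) = x₀ := by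
      intro k h1
      induction k, h1 using Nat.le_induction with
      | base =>
        intro _
        rw [Finset.Icc_self, Finset.sum_singleton]
        rw [hα1, hτ1, mul_one]
      | succ k hk ih =>
        intro h3
        rw [Finset.sum_Icc_succ_top (by omega : 1 ≤ k+1)]
        rw [hαk (k+1) (by omega), zero_mul, add_zero]
        exact ih (by omega)
    have havg : ∀ k, 1 ≤ k → k ≤ N+2 → π'.avg k = lam (k-1) := by
      intro k h1 h3
      rw [DSC.avg, hAsum k h1 h3, hTsum k h1 h3]
      have hl : lam (k-1) ≠ 0 := ne_of_gt (hlampos (k-1) (by omega))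
      have hx : x₀ ≠ 0 := ne_of_gt hx₀pos
      field_simp
    have fact_lo : ∀ k, 2 ≤ k → k ≤ N+2 → β (h₀ + 2 - k - 1) = lam (k-1) := by
      intro k h2 h3
      rcases Nat.lt_or_ge k (N+2) with h | h
      · rw [hlammid (k-1) (by omega) (by omega)]
        congr 1
        omega
      · have : k = N+2 := by omega
        subst this
        rw [show N+2-1 = N+1 by omega, hlamlast, hzdef]
        congr 1
        omega
    have hBRlow : ∀ k, 2 ≤ k → k ≤ N+2 → β (π'.a k - 1) ≤ lam (k-1) := by
      intro k h2 h3
      rw [hak k h2, fact_lo k h2 h3]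
    have hBRhigh : ∀ k, 2 ≤ k → k ≤ N+2 → (π'.a k < n → lam (k-2) ≤ β (π'.a k)) := by
      intro k h2 h3 hlt
      rw [hak k h2] at hlt ⊢
      rcases Nat.lt_or_ge k 3 with h | h
      · have : k = 2 := by omega
        subst this
        rw [show (2:ℕ)-2 = 0 from rfl, hlam0]
        rw [show h₀ + 2 - 2 = h₀ by omega] at hlt ⊢
        exact hx₀hi hlt
      · rw [hlammid (k-2) (by omega) (by omega)]
        apply le_of_eq
        congr 1
        omega
    have hval : π'.Valid n m c F p := by
      refine ⟨by show (1:ℕ) ≤ N + 2; omega, ?_, ?_, ?_⟩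
      · intro k hk
        have hmem := Finset.mem_Icc.mp hk
        have hK2 : k ≤ N+2 := hmem.2
        refine ⟨?_, hτpos k hmem.1 hK2, ?_⟩
        · rcases Nat.lt_or_ge k 2 with h | h
          · rw [show k = 1 by omega, hα1]; exact hx₀pos.le
          · rw [hαk k h]
        · rcases Nat.lt_or_ge k 2 with h | h
          · rw [show k = 1 by omega, ha1]
            exact Finset.mem_Icc.mpr ⟨by omega, hh2⟩
          · rw [hak k h]
            exact Finset.mem_Icc.mpr ⟨by omega, by omega⟩
      · intro k hk
        have hmem := Finset.mem_Icc.mp hk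
        have hK2 : k ≤ N+2 := hmem.2
        rw [havg k hmem.1 hK2]
        have hlamnn : 0 ≤ lam (k-1) := (hlampos (k-1) (by omega)).le
        rcases Nat.lt_or_ge k 2 with h | h
        · have hk1 : k = 1 := by omega
          subst hk1
          rw [ha1, show (1:ℕ)-1 = 0 from rfl, hlam0]
          apply br_mem hβ x₀ hx₀pos.le h₀ (by omega) hh2
          · exact hx₀gt.le
          · exact hx₀hi
        · apply br_mem hβ _ hlamnn (π'.a k) (by rw [hak k h]; omega) (by rw [hak k h]; omega)
          · exact hBRlow k h hK2
          · intro hlt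
            have hd := hlamdec (k-1) (by omega) (by omega)
            rw [show k-1-1 = k-2 by omega] at hd
            exact le_trans hd.le (hBRhigh k h hK2 hlt)
      · intro k h2 h3
        have hK2 : k ≤ N+2 := h3
        rw [havg (k-1) (by omega) (by omega), show k-1-1 = k-2 by omega]
        have hlamnn : 0 ≤ lam (k-2) := (hlampos (k-2) (by omega)).le
        apply br_mem hβ _ hlamnn (π'.a k) (by rw [hak k h2]; omega) (by rw [hak k h2]; omega)
        · have hd := hlamdec (k-1) (by omega) (by omega)
          rw [show k-1-1 = k-2 by omega] at hd
          exact le_trans (hBRlow k h2 hK2) hd.le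
        · exact hBRhigh k h2 hK2
    have hUsum : ∀ k, 1 ≤ k → k ≤ N+2 →
        (∑ t ∈ Finset.Icc 1 k,
          π'.τ t * (expRew m F r (π'.a t) - π'.α t * expPay m F p (π'.a t)))
          = x₀ * (R (π'.a k) / lam (k-1) + (P h₀ + S h₀) - (P (π'.a k) + S (π'.a k)))
            - x₀ * P h₀ := by
      intro k h1
      induction k, h1 using Nat.le_induction with
      | base =>
        intro _
        rw [Finset.Icc_self, Finset.sum_singleton]
        rw [ha1, hα1, hτ1, show (1:ℕ)-1 = 0 from rfl, hlam0]
        have hx : x₀ ≠ 0 := ne_of_gt hx₀pos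
        field_simp
        ring
      | succ k hk ih =>
        intro h3
        rw [Finset.sum_Icc_succ_top (by omega : 1 ≤ k+1), ih (by omega)]
        rw [hαk (k+1) (by omega), hτk (k+1) (by omega)]
        rw [show k+1-1 = k by omega, show k+1-2 = k-1 by omega]
        rcases Nat.lt_or_ge k 2 with h | h
        · have hk1 : k = 1 := by omega
          subst hk1
          rw [hak 2 (le_refl _), ha1, show h₀+2-2 = h₀ by omega,
            show (1:ℕ)-1 = 0 from rfl, hlam0]
          have l1 : lam 1 ≠ 0 := ne_of_gt (hlampos 1 (by omega))
          have hx : x₀ ≠ 0 := ne_of_gt hx₀pos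
          field_simp
          ring
        · rw [hak (k+1) (by omega), hak k h]
          set l := h₀ + 1 - k with hldef
          rw [show h₀ + 2 - k = l + 1 by omega, show h₀ + 2 - (k+1) = l by omega]
          have hlml : lam (k-1) = β l := by
            rw [hlammid (k-1) (by omega) (by omega)]
            congr 1
            omega
          have hl1 : 1 ≤ l := by omega
          have hl2 : l ≤ n-1 := by omega
          have hβl : 0 < β l := beta_pos hβ l hl1 hl2
          have hind := indiff_s6 hβ l hl1 hl2
          have hstep := Sc_step (r := r) hβ l hl1 hl2
          have hWl : Wc m c F r (l+1) = R (l+1) - c (l+1) := rfl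
          have hWl2 : Wc m c F r l = R l - c l := rfl
          rw [hWl, hWl2] at hstep
          rw [← hSdef] at hstep
          rw [← hPdef] at hind
          rw [hlml]
          have hlamk : lam k ≠ 0 := ne_of_gt (hlampos k (by omega))
          have key : x₀ * (R (l+1) / β l) - x₀ * (R l / β l)
              = x₀ * ((P (l+1) + S (l+1)) - (P l + S l)) := by
            field_simp
            linear_combination hind - hstep
          linear_combination key
    have hUtil : π'.Util m F r p = GGc m n c F r p β j₀ := by
      have hGGj : GGc m n c F r p β j₀ = R j₀ - z * (P j₀ + S j₀ - S h₀) := by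
        simp only [GGc, Mc]
        rw [← hh3]
      rw [DSC.Util, hGGj]
      have hKK : π'.K = N+2 := rfl
      rw [hKK]
      rw [hUsum (N+2) (by omega) (le_refl _)]
      have hTT : π'.Tsum (N+2) = x₀ / lam (N+2-1) := hTsum (N+2) (by omega) (le_refl _)
      rw [hTT]
      rw [hak (N+2) (by omega), show h₀+2-(N+2) = j₀ by omega,
        show N+2-1 = N+1 by omega, hlamlast]
      have hzne : z ≠ 0 := ne_of_gt hzpos
      have hx : x₀ ≠ 0 := ne_of_gt hx₀pos
      field_simp
      ring
    exact ⟨π', hval, fun k h2 h3 => hαk k h2, hUtil⟩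

/-- Free-fall contracts are optimal among `p`-scaled dynamic
contracts: every valid `p`-scaled dynamic contract is dominated by a valid
free-fall `p`-scaled contract. -/
theorem free_fall_optimal_p_scaled (n m : ℕ) (c : ℕ → ℝ) (F : ℕ → ℕ → ℝ)
    (r : ℕ → ℝ) (p : ℕ → ℝ) (β : ℕ → ℝ)
    (hInst : PInstance n m c F r p) (hβ : Breakpoints n m c F p β)
    (π : DSC) (hπ : π.Valid n m c F p) :
    ∃ π' : DSC, π'.Valid n m c F p ∧ π'.FreeFall ∧
      π'.Util m F r p ≥ π.Util m F r p := by
  obtain ⟨j₀, hj₀mem, hj₀max⟩ := Finset.exists_max_image (Finset.Icc 1 n)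
    (fun j => GGc m n c F r p β j) ⟨1, Finset.mem_Icc.mpr ⟨le_refl _, by
      have := hInst.1; omega⟩⟩
  obtain ⟨hj1, hj2⟩ := Finset.mem_Icc.mp hj₀mem
  obtain ⟨π', hval, hff, hUtil⟩ := witness_exists n m c F r p β hInst hβ j₀ hj1 hj2
  refine ⟨π', hval, hff, ?_⟩
  rw [ge_iff_le, hUtil]
  apply util_le n m c F r p β hInst hβ π hπ
  intro j h1 h2
  exact hj₀max j (Finset.mem_Icc.mpr ⟨h1, h2⟩)
end
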